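/- arXiv:1905.09494 — 14 statements merged into one kernel-verified Lean document; each statement's English description precedes it below -/
import Mathlib

section
/- Let G be a torsion-free group and let α = α₁h₁ + α₂h₂ + α₃h₃ be a zero divisor of support size 3 in the rational group algebra ℚ[G] (so α₁, α₂, α₃ ∈ ℚ are nonzero and h₁, h₂, h₃ ∈ G are pairwise distinct). Then there exist signs ε₁, ε₂, ε₃ ∈ {1, −1}, with either all εᵢ equal to 1 or exactly one εᵢ equal to −1, such that ε₁h₁ + ε₂h₂ + ε₃h₃ is a zero divisor in the integral group ring ℤ[G]. -/
/-- An element `a` of a ring is a (right) zero divisor in the sense of the paper: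
`a ≠ 0` and `a * b = 0` for some nonzero `b`. -/
def IsZeroDivisorElem {R : Type*} [Ring R] (a : R) : Prop :=
  a ≠ 0 ∧ ∃ b : R, b ≠ 0 ∧ a * b = 0

/-- A monoid is torsion-free if its only element of finite order is the identity. -/
def Monoid.IsTorsionFree (G : Type*) [Monoid G] : Prop :=
  ∀ g : G, g ≠ 1 → ¬IsOfFinOrder g

instance {R G : Type*} [Semiring R] : CoeFun (MonoidAlgebra R G) (fun _ => G → R) :=
  ⟨fun x => x.coeff⟩

open MonoidAlgebra Finsupp

/-- Coefficient of a product of a 3-term element with `B`. -/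
lemma tri_mul_apply {R : Type*} [Ring R] {G : Type*} [Group G]
    (h₁ h₂ h₃ : G) (A₁ A₂ A₃ : R) (B : MonoidAlgebra R G) (x : G) :
    ((MonoidAlgebra.single h₁ A₁ + MonoidAlgebra.single h₂ A₂ +
      MonoidAlgebra.single h₃ A₃) * B) x
      = A₁ * B (h₁⁻¹ * x) + A₂ * B (h₂⁻¹ * x) + A₃ * B (h₃⁻¹ * x) := by
  rw [add_mul, add_mul, MonoidAlgebra.coeff_add, MonoidAlgebra.coeff_add,
    Finsupp.add_apply, Finsupp.add_apply,
    MonoidAlgebra.coeff_single_mul_apply, MonoidAlgebra.coeff_single_mul_apply,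
    MonoidAlgebra.coeff_single_mul_apply]

lemma tri_ne_zero {R : Type*} [Ring R] {G : Type*} [Group G]
    {h₁ h₂ h₃ : G} {A₁ A₂ A₃ : R} (hA₁ : A₁ ≠ 0) (h12 : h₁ ≠ h₂) (h13 : h₁ ≠ h₃) :
    (MonoidAlgebra.single h₁ A₁ + MonoidAlgebra.single h₂ A₂ +
      MonoidAlgebra.single h₃ A₃ : MonoidAlgebra R G) ≠ 0 := by
  intro h
  have hx := Finsupp.ext_iff.mp (congrArg MonoidAlgebra.coeff h) h₁
  rw [MonoidAlgebra.coeff_add, MonoidAlgebra.coeff_add,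
    Finsupp.add_apply, Finsupp.add_apply, MonoidAlgebra.coeff_zero, Finsupp.zero_apply,
    MonoidAlgebra.coeff_single, MonoidAlgebra.coeff_single, MonoidAlgebra.coeff_single,
    Finsupp.single_eq_same, Finsupp.single_eq_of_ne h12,
    Finsupp.single_eq_of_ne h13, add_zero, add_zero] at hx
  exact hA₁ hx

lemma tri_neg {G : Type*} [Group G] (h₁ h₂ h₃ : G) (A₁ A₂ A₃ : ℤ) :
    (MonoidAlgebra.single h₁ (-A₁) + MonoidAlgebra.single h₂ (-A₂) +
      MonoidAlgebra.single h₃ (-A₃) : MonoidAlgebra ℤ G)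
    = -(MonoidAlgebra.single h₁ A₁ + MonoidAlgebra.single h₂ A₂ +
        MonoidAlgebra.single h₃ A₃) := by
  simp only [MonoidAlgebra.single_neg]
  abel

/-- Key divisibility lemma: if a prime `p` divides `A₁` and the coefficient
relations hold with `B` not everywhere divisible by `p`, then `p` divides
`A₂` and `A₃`. -/
lemma keyD {G : Type*} [Group G] (hG : Monoid.IsTorsionFree G)
    {h₁ h₂ h₃ : G} (h23 : h₂ ≠ h₃) {A₁ A₂ A₃ : ℤ} {p : ℕ} (hp : p.Prime)
    (hpA₁ : (p : ℤ) ∣ A₁) (B : MonoidAlgebra ℤ G)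
    (hprim : ∃ x, ¬ (p : ℤ) ∣ B x)
    (hmul : ∀ x, A₁ * B (h₁⁻¹ * x) + A₂ * B (h₂⁻¹ * x) + A₃ * B (h₃⁻¹ * x) = 0) :
    (p : ℤ) ∣ A₂ ∧ (p : ℤ) ∣ A₃ := by
  have hpZ : Prime (p : ℤ) := Nat.prime_iff_prime_int.mp hp
  by_cases hA₂ : (p : ℤ) ∣ A₂
  · refine ⟨hA₂, ?_⟩
    by_contra hA₃
    have hall : ∀ y, (p : ℤ) ∣ B y := by
      intro y
      have h := hmul (h₃ * y)
      have hdvd : (p : ℤ) ∣ A₃ * B (h₃⁻¹ * (h₃ * y)) := by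
        have : A₃ * B (h₃⁻¹ * (h₃ * y))
            = -(A₁ * B (h₁⁻¹ * (h₃ * y)) + A₂ * B (h₂⁻¹ * (h₃ * y))) := by linarith
        rw [this]
        exact dvd_neg.mpr (dvd_add (hpA₁.mul_right _) (hA₂.mul_right _))
      rw [inv_mul_cancel_left] at hdvd
      exact (hpZ.dvd_mul.mp hdvd).resolve_left hA₃
    obtain ⟨x, hx⟩ := hprim
    exact hx (hall x)
  · exfalso
    by_cases hA₃ : (p : ℤ) ∣ A₃
    · have hall : ∀ y, (p : ℤ) ∣ B y := by
        intro y
        have h := hmul (h₂ * y)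
        have hdvd : (p : ℤ) ∣ A₂ * B (h₂⁻¹ * (h₂ * y)) := by
          have : A₂ * B (h₂⁻¹ * (h₂ * y))
              = -(A₁ * B (h₁⁻¹ * (h₂ * y)) + A₃ * B (h₃⁻¹ * (h₂ * y))) := by linarith
          rw [this]
          exact dvd_neg.mpr (dvd_add (hpA₁.mul_right _) (hA₃.mul_right _))
        rw [inv_mul_cancel_left] at hdvd
        exact (hpZ.dvd_mul.mp hdvd).resolve_left hA₂
      obtain ⟨x, hx⟩ := hprim
      exact hx (hall x)
    · -- the infinite support argument
      obtain ⟨y₀, hy₀⟩ := hprim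
      set v : G := h₃⁻¹ * h₂ with hv_def
      have hv : v ≠ 1 := fun h => h23 (inv_mul_eq_one.mp h).symm
      have key : ∀ n : ℕ, ¬ (p : ℤ) ∣ B (v ^ n * y₀) := by
        intro n
        induction n with
        | zero => simpa using hy₀
        | succ n ih =>
          intro hdvd
          have h := hmul (h₂ * (v ^ n * y₀))
          have e2 : h₂⁻¹ * (h₂ * (v ^ n * y₀)) = v ^ n * y₀ := inv_mul_cancel_left _ _
          have e3 : h₃⁻¹ * (h₂ * (v ^ n * y₀)) = v ^ (n + 1) * y₀ := by
            rw [← mul_assoc, ← mul_assoc, ← hv_def, ← pow_succ']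
          rw [e2, e3] at h
          have hdvd2 : (p : ℤ) ∣ A₂ * B (v ^ n * y₀) := by
            have : A₂ * B (v ^ n * y₀)
                = -(A₁ * B (h₁⁻¹ * (h₂ * (v ^ n * y₀))) + A₃ * B (v ^ (n + 1) * y₀)) := by
              linarith
            rw [this]
            exact dvd_neg.mpr (dvd_add (hpA₁.mul_right _) (hdvd.mul_left A₃))
          rcases hpZ.dvd_mul.mp hdvd2 with h' | h'
          · exact hA₂ h'
          · exact ih h'
      have hvfin : ¬ IsOfFinOrder v := hG v hv
      have hinj : Function.Injective (fun n : ℕ => v ^ n * y₀) := by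
        intro m n h
        exact injective_pow_iff_not_isOfFinOrder.mpr hvfin (mul_right_cancel h)
      have hmem : ∀ n : ℕ, v ^ n * y₀ ∈ (B.coeff.support : Set G) := by
        intro n
        simp only [Finset.coe_sort_coe, Finsupp.mem_support_iff, Finset.mem_coe]
        intro h0
        exact key n (h0 ▸ dvd_zero _)
      exact Set.infinite_of_injective_forall_mem hinj hmem B.coeff.support.finite_toSet

/-- Extract a primitive part from a nonzero integral element. -/
lemma exists_primitive {G : Type*} [Group G] (B : MonoidAlgebra ℤ G) (hB : B ≠ 0) :
    ∃ (c : ℤ) (B' : MonoidAlgebra ℤ G), c ≠ 0 ∧ B' ≠ 0 ∧ (∀ x, B x = c * B' x) ∧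
      ∀ p : ℕ, p.Prime → ∃ x, ¬ (p : ℤ) ∣ B' x := by
  set c : ℤ := B.coeff.support.gcd B.coeff with hc_def
  have hc : c ≠ 0 := by
    intro h
    apply hB
    ext x
    by_cases hx : x ∈ B.coeff.support
    · exact Finset.gcd_eq_zero_iff.mp (hc_def ▸ h) x hx
    · simpa using Finsupp.notMem_support_iff.mp hx
  have hdvd : ∀ x, c ∣ B x := by
    intro x
    by_cases hx : x ∈ B.coeff.support
    · exact Finset.gcd_dvd hx
    · rw [Finsupp.notMem_support_iff.mp hx]; exact dvd_zero _
  set B' : MonoidAlgebra ℤ G := MonoidAlgebra.ofCoeff (Finsupp.mapRange (· / c) (Int.zero_ediv c) B.coeff) with hB'_def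
  have hB'x : ∀ x, B' x = B x / c := fun x => by rw [hB'_def, MonoidAlgebra.coeff_ofCoeff, Finsupp.mapRange_apply]
  have hBx : ∀ x, B x = c * B' x := fun x => by
    rw [hB'x]; exact (Int.mul_ediv_cancel' (hdvd x)).symm
  have hB'ne : B' ≠ 0 := by
    intro h0
    apply hB
    ext x
    have h := hBx x
    rw [h0, MonoidAlgebra.coeff_zero, Finsupp.zero_apply, mul_zero] at h
    simpa using h
  refine ⟨c, B', hc, hB'ne, hBx, ?_⟩
  intro p pp
  by_contra hcon
  push_neg at hcon
  have hpc : ((p : ℤ) * c) ∣ c := by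
    rw [hc_def]
    apply Finset.dvd_gcd
    intro x hx
    obtain ⟨k, hk⟩ := hcon x
    exact ⟨k, by rw [hBx x, hk]; ring⟩
  obtain ⟨k, hk⟩ := hpc
  have h1 : c * ((p : ℤ) * k) = c * 1 := by linear_combination -hk
  have h2 : (p : ℤ) * k = 1 := mul_left_cancel₀ hc h1
  have h3 : (p : ℤ) ∣ 1 := ⟨k, h2.symm⟩
  have h4 := Int.le_of_dvd one_pos h3
  have := pp.two_le
  omega

/-- Main induction: integral 3-term annihilators force unit coefficients. -/
lemma keyE {G : Type*} [Group G] (hG : Monoid.IsTorsionFree G)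
    (h₁ h₂ h₃ : G) (h12 : h₁ ≠ h₂) (h13 : h₁ ≠ h₃) (h23 : h₂ ≠ h₃) :
    ∀ n : ℕ, ∀ A₁ A₂ A₃ : ℤ, A₁.natAbs + A₂.natAbs + A₃.natAbs ≤ n →
    A₁ ≠ 0 → A₂ ≠ 0 → A₃ ≠ 0 →
    ∀ B : MonoidAlgebra ℤ G, B ≠ 0 →
    (MonoidAlgebra.single h₁ A₁ + MonoidAlgebra.single h₂ A₂ +
      MonoidAlgebra.single h₃ A₃) * B = 0 →
    (∃ ε₁ ε₂ ε₃ : ℤ,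
      ((ε₁ = 1 ∧ ε₂ = 1 ∧ ε₃ = 1) ∨ (ε₁ = -1 ∧ ε₂ = 1 ∧ ε₃ = 1) ∨
        (ε₁ = 1 ∧ ε₂ = -1 ∧ ε₃ = 1) ∨ (ε₁ = 1 ∧ ε₂ = 1 ∧ ε₃ = -1)) ∧
      IsZeroDivisorElem
        (MonoidAlgebra.single h₁ ε₁ + MonoidAlgebra.single h₂ ε₂ +
          MonoidAlgebra.single h₃ ε₃ : MonoidAlgebra ℤ G)) := by
  intro n
  induction n with
  | zero =>
    intro A₁ A₂ A₃ hsum hA₁ hA₂ hA₃ B hB hprod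
    exfalso
    have := Int.natAbs_pos.mpr hA₁
    omega
  | succ n ih =>
    intro A₁ A₂ A₃ hsum hA₁ hA₂ hA₃ B hB hprod
    by_cases hall : A₁.natAbs = 1 ∧ A₂.natAbs = 1 ∧ A₃.natAbs = 1
    · -- base case: all coefficients ±1
      obtain ⟨n1, n2, n3⟩ := hall
      have mk : ∀ e₁ e₂ e₃ : ℤ, e₁ ≠ 0 →
          (MonoidAlgebra.single h₁ e₁ + MonoidAlgebra.single h₂ e₂ +
            MonoidAlgebra.single h₃ e₃ : MonoidAlgebra ℤ G) * B = 0 →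
          IsZeroDivisorElem
            (MonoidAlgebra.single h₁ e₁ + MonoidAlgebra.single h₂ e₂ +
              MonoidAlgebra.single h₃ e₃ : MonoidAlgebra ℤ G) :=
        fun e₁ e₂ e₃ he hm => ⟨tri_ne_zero he h12 h13, B, hB, hm⟩
      have negprod : (MonoidAlgebra.single h₁ (-A₁) + MonoidAlgebra.single h₂ (-A₂) +
          MonoidAlgebra.single h₃ (-A₃) : MonoidAlgebra ℤ G) * B = 0 := by
        rw [tri_neg, neg_mul, hprod, neg_zero]
      rcases Int.natAbs_eq_iff.mp n1 with rfl | rfl <;>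
        rcases Int.natAbs_eq_iff.mp n2 with rfl | rfl <;>
        rcases Int.natAbs_eq_iff.mp n3 with rfl | rfl <;>
        simp only [Int.cast_one, Nat.cast_one, neg_neg] at hprod negprod
      · exact ⟨1, 1, 1, by norm_num, mk 1 1 1 one_ne_zero hprod⟩
      · exact ⟨1, 1, -1, by norm_num, mk 1 1 (-1) one_ne_zero hprod⟩
      · exact ⟨1, -1, 1, by norm_num, mk 1 (-1) 1 one_ne_zero hprod⟩
      · exact ⟨-1, 1, 1, by norm_num, mk (-1) 1 1 (by norm_num) negprod⟩
      · exact ⟨-1, 1, 1, by norm_num, mk (-1) 1 1 (by norm_num) hprod⟩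
      · exact ⟨1, -1, 1, by norm_num, mk 1 (-1) 1 one_ne_zero negprod⟩
      · exact ⟨1, 1, -1, by norm_num, mk 1 1 (-1) one_ne_zero negprod⟩
      · exact ⟨1, 1, 1, by norm_num, mk 1 1 1 one_ne_zero negprod⟩
    · -- inductive case: divide out a prime
      obtain ⟨c, B', hc, hB', hBx, hBprim⟩ := exists_primitive B hB
      have hmulB : ∀ x, A₁ * B (h₁⁻¹ * x) + A₂ * B (h₂⁻¹ * x) + A₃ * B (h₃⁻¹ * x) = 0 := by
        intro x
        have := Finsupp.ext_iff.mp (congrArg MonoidAlgebra.coeff hprod) x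
        rwa [tri_mul_apply, MonoidAlgebra.coeff_zero, Finsupp.zero_apply] at this
      have hmulB' : ∀ x, A₁ * B' (h₁⁻¹ * x) + A₂ * B' (h₂⁻¹ * x) + A₃ * B' (h₃⁻¹ * x) = 0 := by
        intro x
        have h := hmulB x
        rw [hBx, hBx, hBx] at h
        have : c * (A₁ * B' (h₁⁻¹ * x) + A₂ * B' (h₂⁻¹ * x) + A₃ * B' (h₃⁻¹ * x)) = 0 := by
          linarith
        exact (mul_eq_zero.mp this).resolve_left hc
      -- find a prime dividing some Aᵢ
      have hex : ∃ p : ℕ, p.Prime ∧ ((p : ℤ) ∣ A₁ ∨ (p : ℤ) ∣ A₂ ∨ (p : ℤ) ∣ A₃) := by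
        have habs : A₁.natAbs ≠ 1 ∨ A₂.natAbs ≠ 1 ∨ A₃.natAbs ≠ 1 := by tauto
        have cast_dvd : ∀ (A : ℤ) (p : ℕ), p ∣ A.natAbs → (p : ℤ) ∣ A := by
          intro A p h
          exact dvd_trans (Int.natCast_dvd_natCast.mpr h) (Int.natAbs_dvd.mpr dvd_rfl)
        rcases habs with h | h | h
        · obtain ⟨p, pp, pd⟩ := Nat.exists_prime_and_dvd h
          exact ⟨p, pp, Or.inl (cast_dvd _ _ pd)⟩
        · obtain ⟨p, pp, pd⟩ := Nat.exists_prime_and_dvd h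
          exact ⟨p, pp, Or.inr (Or.inl (cast_dvd _ _ pd))⟩
        · obtain ⟨p, pp, pd⟩ := Nat.exists_prime_and_dvd h
          exact ⟨p, pp, Or.inr (Or.inr (cast_dvd _ _ pd))⟩
      obtain ⟨p, pp, hpd⟩ := hex
      -- p divides all three coefficients
      have hdall : (p : ℤ) ∣ A₁ ∧ (p : ℤ) ∣ A₂ ∧ (p : ℤ) ∣ A₃ := by
        rcases hpd with h | h | h
        · obtain ⟨d2, d3⟩ := keyD hG h23 pp h B' (hBprim p pp) hmulB'
          exact ⟨h, d2, d3⟩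
        · obtain ⟨d1, d3⟩ := keyD (h₁ := h₂) (h₂ := h₁) (h₃ := h₃) (A₁ := A₂) (A₂ := A₁) (A₃ := A₃) hG h13 pp h B' (hBprim p pp)
            (fun x => by have := hmulB' x; linarith)
          exact ⟨d1, h, d3⟩
        · obtain ⟨d1, d2⟩ := keyD (h₁ := h₃) (h₂ := h₁) (h₃ := h₂) (A₁ := A₃) (A₂ := A₁) (A₃ := A₂) hG h12 pp h B' (hBprim p pp)
            (fun x => by have := hmulB' x; linarith)
          exact ⟨d1, d2, h⟩
      obtain ⟨⟨A₁', rfl⟩, ⟨A₂', rfl⟩, ⟨A₃', rfl⟩⟩ := hdall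
      have hp0 : (p : ℤ) ≠ 0 := by exact_mod_cast pp.pos.ne'
      have hA₁' : A₁' ≠ 0 := fun h => hA₁ (by rw [h, mul_zero])
      have hA₂' : A₂' ≠ 0 := fun h => hA₂ (by rw [h, mul_zero])
      have hA₃' : A₃' ≠ 0 := fun h => hA₃ (by rw [h, mul_zero])
      have hprod' : (MonoidAlgebra.single h₁ A₁' + MonoidAlgebra.single h₂ A₂' +
          MonoidAlgebra.single h₃ A₃' : MonoidAlgebra ℤ G) * B' = 0 := by
        ext x
        rw [tri_mul_apply, MonoidAlgebra.coeff_zero, Finsupp.zero_apply]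
        have h := hmulB' x
        have : (p : ℤ) * (A₁' * B' (h₁⁻¹ * x) + A₂' * B' (h₂⁻¹ * x) + A₃' * B' (h₃⁻¹ * x))
            = 0 := by linarith
        exact (mul_eq_zero.mp this).resolve_left hp0
      -- the natAbs sum strictly decreases
      have hsum' : A₁'.natAbs + A₂'.natAbs + A₃'.natAbs ≤ n := by
        have e1 : ((p : ℤ) * A₁').natAbs = p * A₁'.natAbs := by
          rw [Int.natAbs_mul, Int.natAbs_natCast]
        have e2 : ((p : ℤ) * A₂').natAbs = p * A₂'.natAbs := by
          rw [Int.natAbs_mul, Int.natAbs_natCast]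
        have e3 : ((p : ℤ) * A₃').natAbs = p * A₃'.natAbs := by
          rw [Int.natAbs_mul, Int.natAbs_natCast]
        have m1 : 1 ≤ A₁'.natAbs := Int.natAbs_pos.mpr hA₁'
        have m2 : 1 ≤ A₂'.natAbs := Int.natAbs_pos.mpr hA₂'
        have m3 : 1 ≤ A₃'.natAbs := Int.natAbs_pos.mpr hA₃'
        have hp2 : 2 ≤ p := pp.two_le
        have l1 : 2 * A₁'.natAbs ≤ p * A₁'.natAbs := Nat.mul_le_mul_right _ hp2
        have l2 : 2 * A₂'.natAbs ≤ p * A₂'.natAbs := Nat.mul_le_mul_right _ hp2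
        have l3 : 2 * A₃'.natAbs ≤ p * A₃'.natAbs := Nat.mul_le_mul_right _ hp2
        rw [e1, e2, e3] at hsum
        omega
      exact ih A₁' A₂' A₃' hsum' hA₁' hA₂' hA₃' B' hB' hprod'

theorem zero_divisor_support_three_rational
    {G : Type*} [Group G] (hG : Monoid.IsTorsionFree G)
    (h₁ h₂ h₃ : G) (a₁ a₂ a₃ : ℚ)
    (ha₁ : a₁ ≠ 0) (ha₂ : a₂ ≠ 0) (ha₃ : a₃ ≠ 0)
    (h12 : h₁ ≠ h₂) (h13 : h₁ ≠ h₃) (h23 : h₂ ≠ h₃)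
    (hzd : IsZeroDivisorElem
      (MonoidAlgebra.single h₁ a₁ + MonoidAlgebra.single h₂ a₂ + MonoidAlgebra.single h₃ a₃ :
        MonoidAlgebra ℚ G)) :
    ∃ ε₁ ε₂ ε₃ : ℤ,
      ((ε₁ = 1 ∧ ε₂ = 1 ∧ ε₃ = 1) ∨ (ε₁ = -1 ∧ ε₂ = 1 ∧ ε₃ = 1) ∨
        (ε₁ = 1 ∧ ε₂ = -1 ∧ ε₃ = 1) ∨ (ε₁ = 1 ∧ ε₂ = 1 ∧ ε₃ = -1)) ∧
      IsZeroDivisorElem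
        (MonoidAlgebra.single h₁ ε₁ + MonoidAlgebra.single h₂ ε₂ + MonoidAlgebra.single h₃ ε₃ :
          MonoidAlgebra ℤ G) := by
  obtain ⟨-, β, hβ, hprod⟩ := hzd
  -- coefficient relations over ℚ
  have hcoeff : ∀ x, a₁ * β (h₁⁻¹ * x) + a₂ * β (h₂⁻¹ * x) + a₃ * β (h₃⁻¹ * x) = 0 := by
    intro x
    have := Finsupp.ext_iff.mp (congrArg MonoidAlgebra.coeff hprod) x
    rwa [tri_mul_apply, MonoidAlgebra.coeff_zero, Finsupp.zero_apply] at this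
  -- clear denominators of β
  set M : ℕ := ∏ x ∈ β.coeff.support, (β x).den with hM_def
  have hMne : (M : ℚ) ≠ 0 := by
    rw [hM_def]
    push_cast
    exact Finset.prod_ne_zero_iff.mpr fun x _ => by exact_mod_cast (β x).den_nz
  have hint : ∀ x, ∃ k : ℤ, β x * M = (k : ℚ) := by
    intro x
    by_cases hx : x ∈ β.coeff.support
    · have hdvd : (β x).den ∣ M := Finset.dvd_prod_of_mem (fun x => (β x).den) hx
      obtain ⟨m, hm⟩ := hdvd
      refine ⟨(β x).num * m, ?_⟩
      have hden : (β x) * ((β x).den : ℚ) = ((β x).num : ℚ) := by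
        have hne : ((β x).den : ℚ) ≠ 0 := by exact_mod_cast (β x).den_nz
        nth_rewrite 1 [← Rat.num_div_den (β x)]
        exact div_mul_cancel₀ _ hne
      rw [hm]
      push_cast
      rw [← mul_assoc, hden]
    · refine ⟨0, ?_⟩
      rw [Finsupp.notMem_support_iff.mp hx]
      simp
  set B : MonoidAlgebra ℤ G := MonoidAlgebra.ofCoeff (Finsupp.mapRange (fun q => ((q * M : ℚ)).num) (by simp) β.coeff)
    with hB_def
  have hBcast : ∀ x, ((B x : ℤ) : ℚ) = β x * M := by
    intro x
    obtain ⟨k, hk⟩ := hint x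
    rw [hB_def, MonoidAlgebra.coeff_ofCoeff, Finsupp.mapRange_apply, hk]
    simp
  have hBne : B ≠ 0 := by
    obtain ⟨x, hx⟩ : ∃ x, β x ≠ 0 := by
      by_contra h
      push_neg at h
      exact hβ (MonoidAlgebra.ext (Finsupp.ext h))
    intro h0
    apply hx
    have h := hBcast x
    rw [h0, MonoidAlgebra.coeff_zero, Finsupp.zero_apply, Int.cast_zero] at h
    rcases mul_eq_zero.mp h.symm with h' | h'
    · exact h'
    · exact absurd h' hMne
  -- clear denominators of α
  set A₁ : ℤ := a₁.num * (a₂.den * a₃.den) with hA₁_def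
  set A₂ : ℤ := a₂.num * (a₁.den * a₃.den) with hA₂_def
  set A₃ : ℤ := a₃.num * (a₁.den * a₂.den) with hA₃_def
  have hnum : ∀ q : ℚ, (q.num : ℚ) = q * q.den := by
    intro q
    have hne : ((q).den : ℚ) ≠ 0 := by exact_mod_cast q.den_nz
    nth_rewrite 2 [← Rat.num_div_den q]
    rw [div_mul_cancel₀ _ hne]
  set D : ℚ := (a₁.den : ℚ) * a₂.den * a₃.den with hD_def
  have hcA₁ : ((A₁ : ℤ) : ℚ) = a₁ * D := by
    rw [hA₁_def, hD_def]; push_cast; rw [hnum a₁]; ring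
  have hcA₂ : ((A₂ : ℤ) : ℚ) = a₂ * D := by
    rw [hA₂_def, hD_def]; push_cast; rw [hnum a₂]; ring
  have hcA₃ : ((A₃ : ℤ) : ℚ) = a₃ * D := by
    rw [hA₃_def, hD_def]; push_cast; rw [hnum a₃]; ring
  have hA₁ : A₁ ≠ 0 := by
    rw [hA₁_def]
    exact mul_ne_zero (Rat.num_ne_zero.mpr ha₁)
      (by positivity)
  have hA₂ : A₂ ≠ 0 := by
    rw [hA₂_def]
    exact mul_ne_zero (Rat.num_ne_zero.mpr ha₂) (by positivity)
  have hA₃ : A₃ ≠ 0 := by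
    rw [hA₃_def]
    exact mul_ne_zero (Rat.num_ne_zero.mpr ha₃) (by positivity)
  -- integral product vanishes
  have hprodZ : (MonoidAlgebra.single h₁ A₁ + MonoidAlgebra.single h₂ A₂ +
      MonoidAlgebra.single h₃ A₃ : MonoidAlgebra ℤ G) * B = 0 := by
    ext x
    rw [tri_mul_apply, MonoidAlgebra.coeff_zero, Finsupp.zero_apply]
    have : ((A₁ * B (h₁⁻¹ * x) + A₂ * B (h₂⁻¹ * x) + A₃ * B (h₃⁻¹ * x) : ℤ) : ℚ) = 0 := by
      push_cast
      rw [hcA₁, hcA₂, hcA₃, hBcast, hBcast, hBcast]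
      have h := hcoeff x
      linear_combination (D * M) * h
    exact_mod_cast this
  exact keyE hG h₁ h₂ h₃ h12 h13 h23 (A₁.natAbs + A₂.natAbs + A₃.natAbs) A₁ A₂ A₃
    le_rfl hA₁ hA₂ hA₃ B hBne hprodZ
end

section
/- Let p be a prime, G a finite p-group, and F a field of characteristic p. If α = Σ_{g∈G} α_g g ∈ F[G] satisfies Σ_{g∈G} α_g ≠ 0, then α is invertible in F[G]; in particular, α is not a zero divisor of F[G]. -/
section AuxPG

universe u v

variable {G : Type u} [Group G] {F : Type v} [Field F]

private lemma central_single {z : G} (hz : z ∈ Subgroup.center G) (c : F)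
    (f : MonoidAlgebra F G) :
    MonoidAlgebra.single z c * f = f * MonoidAlgebra.single z c := by
  ext y
  rw [MonoidAlgebra.coeff_single_mul_apply, MonoidAlgebra.coeff_mul_single_apply, mul_comm]
  exact congrArg (fun t => f.coeff t * c) (Subgroup.mem_center_iff.mp ((Subgroup.center G).inv_mem hz) y).symm

private lemma central_w {z : G} (hz : z ∈ Subgroup.center G) (f : MonoidAlgebra F G) :
    (MonoidAlgebra.single z (1 : F) - 1) * f = f * (MonoidAlgebra.single z (1 : F) - 1) := by
  rw [sub_mul, mul_sub, one_mul, mul_one, central_single hz]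

private lemma single_sub_single_mem [Finite G] {z : G} (hz : z ∈ Subgroup.center G)
    {a b : G} (h : a * b⁻¹ ∈ Subgroup.zpowers z) (c : F) :
    ∃ γ : MonoidAlgebra F G,
      MonoidAlgebra.single a c - MonoidAlgebra.single b c
        = γ * (MonoidAlgebra.single z (1 : F) - 1) := by
  obtain ⟨k, hk⟩ := (isOfFinOrder_of_finite z).mem_powers_iff_mem_zpowers.mpr h
  have hk' : z ^ k = a * b⁻¹ := hk
  have hab : a = z ^ k * b := by rw [hk', inv_mul_cancel_right]
  refine ⟨(∑ i ∈ Finset.range k, MonoidAlgebra.single z (1 : F) ^ i)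
    * MonoidAlgebra.single b c, ?_⟩
  rw [mul_assoc, ← central_w hz, ← mul_assoc, geom_sum_mul, MonoidAlgebra.single_pow, one_pow,
    sub_mul, one_mul, MonoidAlgebra.single_mul_single, one_mul, hab]

private lemma ker_lemma [Finite G] {z : G} (hz : z ∈ Subgroup.center G)
    (N : Subgroup G) [N.Normal] (hN : N = Subgroup.zpowers z)
    (β : MonoidAlgebra F G)
    (hβ : Finsupp.mapDomain (QuotientGroup.mk (s := N)) β.coeff = 0) :
    ∃ γ : MonoidAlgebra F G, β = γ * (MonoidAlgebra.single z (1 : F) - 1) := by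
  classical
  have key : ∀ g : G, ∃ γ : MonoidAlgebra F G,
      MonoidAlgebra.single g (β.coeff g)
        - MonoidAlgebra.single ((QuotientGroup.mk g : G ⧸ N)).out (β.coeff g)
        = γ * (MonoidAlgebra.single z (1 : F) - 1) := by
    intro g
    apply single_sub_single_mem hz
    rw [← hN]
    have h1 : (QuotientGroup.mk ((QuotientGroup.mk g : G ⧸ N).out) : G ⧸ N)
        = QuotientGroup.mk g := QuotientGroup.out_eq' _
    have h2 : ((QuotientGroup.mk g : G ⧸ N).out)⁻¹ * g ∈ N := (QuotientGroup.eq).mp h1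
    exact Subgroup.Normal.mem_comm ‹N.Normal› h2
  choose γf hγf using key
  have h1 : ∑ g ∈ β.coeff.support, MonoidAlgebra.single g (β.coeff g) = β := by
    exact MonoidAlgebra.sum_coeff_single β
  have h2 : ∑ g ∈ β.coeff.support,
      MonoidAlgebra.single ((QuotientGroup.mk g : G ⧸ N)).out (β.coeff g) = (0 : MonoidAlgebra F G) := by
    have : ∑ g ∈ β.coeff.support,
        MonoidAlgebra.single ((QuotientGroup.mk g : G ⧸ N)).out (β.coeff g)
        = MonoidAlgebra.ofCoeff (Finsupp.mapDomain (fun g : G => ((QuotientGroup.mk g : G ⧸ N)).out) β.coeff) := by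
      rw [Finsupp.mapDomain, Finsupp.sum, MonoidAlgebra.ofCoeff_sum]; rfl
    rw [this, show (fun g : G => ((QuotientGroup.mk g : G ⧸ N)).out)
        = Quotient.out ∘ (QuotientGroup.mk (s := N)) from rfl,
      Finsupp.mapDomain_comp, hβ, Finsupp.mapDomain_zero, MonoidAlgebra.ofCoeff_zero]
  have hdecomp : β = ∑ g ∈ β.coeff.support,
      (MonoidAlgebra.single g (β.coeff g)
        - MonoidAlgebra.single ((QuotientGroup.mk g : G ⧸ N)).out (β.coeff g)) := by
    rw [Finset.sum_sub_distrib, h1, h2, sub_zero]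
  refine ⟨∑ g ∈ β.coeff.support, γf g, ?_⟩
  conv_lhs => rw [hdecomp]
  rw [Finset.sum_mul]
  exact Finset.sum_congr rfl fun g _ => hγf g

private lemma main_aux {p : ℕ} (hp : p.Prime) (n : ℕ) :
    ∀ {G : Type u} [Group G] [Finite G], Nat.card G = n → IsPGroup p G →
    ∀ {F : Type v} [Field F] [CharP F p] (α : MonoidAlgebra F G),
      (MonoidAlgebra.lift F F G 1) α ≠ 0 → IsUnit α := by
  induction n using Nat.strong_induction_on with
  | _ n IH =>
  intro G _ _ hcard hG F _ _ α hα
  rcases subsingleton_or_nontrivial G with hsub | hnt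
  · have hα1 : α = MonoidAlgebra.single 1 (α.coeff 1) := by
      ext g
      rw [Subsingleton.elim g (1 : G)]
      simp
    have hc : α.coeff 1 ≠ 0 := by
      intro h0
      apply hα
      rw [hα1, h0]
      simp
    have hiu : IsUnit (MonoidAlgebra.single (1 : G) (α.coeff 1)) := by
      refine ⟨⟨MonoidAlgebra.single 1 (α.coeff 1), MonoidAlgebra.single 1 (α.coeff 1)⁻¹, ?_, ?_⟩, rfl⟩
      · rw [MonoidAlgebra.single_mul_single, one_mul, mul_inv_cancel₀ hc, ← MonoidAlgebra.one_def]
      · rw [MonoidAlgebra.single_mul_single, one_mul, inv_mul_cancel₀ hc, ← MonoidAlgebra.one_def]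
    rwa [← hα1] at hiu
  · haveI := Fact.mk hp
    haveI := hG.center_nontrivial
    obtain ⟨z', hz'⟩ := exists_ne (1 : Subgroup.center G)
    set z : G := (z' : G) with hzdef
    have hz : z ∈ Subgroup.center G := z'.2
    have hz1 : z ≠ 1 := fun h => hz' (Subtype.ext h)
    obtain ⟨k, hzk⟩ := hG z
    set N := Subgroup.zpowers z with hNdef
    haveI hNn : N.Normal := by
      constructor
      intro m hm g
      have hcm : m ∈ Subgroup.center G := Subgroup.zpowers_le.mpr hz hm
      rwa [Subgroup.mem_center_iff.mp hcm g, mul_inv_cancel_right]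
    set q := QuotientGroup.mk' N with hqdef
    set π := MonoidAlgebra.mapDomainAlgHom F F q with hπdef
    have hπsingle : ∀ (g : G) (c : F), π (MonoidAlgebra.single g c)
        = MonoidAlgebra.single (QuotientGroup.mk g : G ⧸ N) c := by
      intro g c
      simp only [hπdef, MonoidAlgebra.mapDomainAlgHom_apply, Finsupp.mapDomain_single]
      exact MonoidAlgebra.mapDomain_single
    have hcomp : (MonoidAlgebra.lift F F (G ⧸ N) 1).comp π = MonoidAlgebra.lift F F G 1 := by
      apply MonoidAlgebra.algHom_ext
      intro g
      simp [hπsingle g 1]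
      exact Subsingleton.elim _ _
    have hπα : (MonoidAlgebra.lift F F (G ⧸ N) 1) (π α) ≠ 0 := by
      have := AlgHom.congr_fun hcomp α
      simp only [AlgHom.comp_apply] at this
      rw [this]
      exact hα
    have hlt : Nat.card (G ⧸ N) < n := by
      have hcard2 : Nat.card G = Nat.card (G ⧸ N) * Nat.card N :=
        Subgroup.card_eq_card_quotient_mul_card_subgroup N
      have h2 : 2 ≤ Nat.card N := by
        haveI : Nontrivial N := ⟨⟨⟨z, Subgroup.mem_zpowers z⟩, 1, by
          intro h; exact hz1 (by simpa using congrArg Subtype.val h)⟩⟩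
        exact Finite.one_lt_card
      have hpos : 0 < Nat.card (G ⧸ N) := Nat.card_pos
      rw [hcard2] at hcard
      calc Nat.card (G ⧸ N) < Nat.card (G ⧸ N) * 2 := by omega
        _ ≤ Nat.card (G ⧸ N) * Nat.card N := Nat.mul_le_mul_left _ h2
        _ = n := hcard
    have hπαunit : IsUnit (π α) :=
      IH _ hlt rfl (hG.to_quotient N) (π α) hπα
    obtain ⟨u, hu⟩ := hπαunit
    have hsurj : ∀ v : MonoidAlgebra F (G ⧸ N), ∃ β, π β = v := by
      intro v
      refine ⟨MonoidAlgebra.mapDomain Quotient.out v, ?_⟩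
      show MonoidAlgebra.ofCoeff (Finsupp.mapDomain (⇑q) (Finsupp.mapDomain Quotient.out v.coeff)) = v
      rw [← Finsupp.mapDomain_comp]
      have : (⇑q) ∘ (Quotient.out : G ⧸ N → G) = id := by
        funext c
        exact QuotientGroup.out_eq' c
      rw [this, Finsupp.mapDomain_id, MonoidAlgebra.ofCoeff_coeff]
    obtain ⟨β, hβ⟩ := hsurj ↑u⁻¹
    haveI hCharP : CharP (MonoidAlgebra F G) p :=
      charP_of_injective_algebraMap (algebraMap F (MonoidAlgebra F G)).injective p
    have hwnil : (MonoidAlgebra.single z (1 : F) - 1) ^ p ^ k = 0 := by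
      rw [sub_pow_char_pow_of_commute _ _ (Commute.one_right _), MonoidAlgebra.single_pow,
        one_pow, hzk, one_pow, ← MonoidAlgebra.one_def, sub_self]
    have hnil : ∀ γ : MonoidAlgebra F G,
        IsNilpotent (γ * (MonoidAlgebra.single z (1 : F) - 1)) := by
      intro γ
      refine ⟨p ^ k, ?_⟩
      have hcomm : Commute γ (MonoidAlgebra.single z (1 : F) - 1) := (central_w hz γ).symm
      rw [hcomm.mul_pow, hwnil, mul_zero]
    have hkerq : ∀ x : MonoidAlgebra F G, π x = 0 →
        Finsupp.mapDomain (QuotientGroup.mk (s := N)) x.coeff = 0 := by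
      intro x hx
      exact congrArg MonoidAlgebra.coeff hx
    have hright : IsUnit (α * β) := by
      have hx : π (α * β - 1) = 0 := by
        rw [map_sub, map_mul, map_one, hβ, ← hu, u.mul_inv, sub_self]
      obtain ⟨γ, hγ⟩ := ker_lemma hz N rfl _ (hkerq _ hx)
      have : α * β = 1 + γ * (MonoidAlgebra.single z (1 : F) - 1) := by
        rw [← hγ]; abel
      rw [this]
      exact (hnil γ).isUnit_one_add
    have hleft : IsUnit (β * α) := by
      have hx : π (β * α - 1) = 0 := by
        rw [map_sub, map_mul, map_one, hβ, ← hu, u.inv_mul, sub_self]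
      obtain ⟨γ, hγ⟩ := ker_lemma hz N rfl _ (hkerq _ hx)
      have : β * α = 1 + γ * (MonoidAlgebra.single z (1 : F) - 1) := by
        rw [← hγ]; abel
      rw [this]
      exact (hnil γ).isUnit_one_add
    obtain ⟨v, hv⟩ := hright
    obtain ⟨w, hw⟩ := hleft
    have h1 : α * (β * ↑v⁻¹) = 1 := by rw [← mul_assoc, ← hv, v.mul_inv]
    have h2 : (↑w⁻¹ * β) * α = 1 := by rw [mul_assoc, ← hw, w.inv_mul]
    have heq : β * ↑v⁻¹ = ↑w⁻¹ * β := by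
      have := congrArg (fun x => (↑w⁻¹ * β) * x) h1
      simp only [mul_one] at this
      rw [← this, ← mul_assoc, h2, one_mul]
    exact ⟨⟨α, _, h1, by rw [heq, h2]⟩, rfl⟩

end AuxPG

theorem isUnit_of_augmentation_ne_zero_finite_p_group
    {p : ℕ} (hp : p.Prime) {G : Type*} [Group G] [Finite G] (hG : IsPGroup p G)
    {F : Type*} [Field F] [CharP F p]
    (α : MonoidAlgebra F G) (hα : ∑ g ∈ α.coeff.support, α.coeff g ≠ 0) :
    IsUnit α ∧ ¬ IsZeroDivisorElem α := by
  have hε : (MonoidAlgebra.lift F F G 1) α = ∑ g ∈ α.coeff.support, α.coeff g := by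
    rw [MonoidAlgebra.lift_apply]
    simp [Finsupp.sum]
  have hu : IsUnit α := main_aux hp (Nat.card G) rfl hG α (by rw [hε]; exact hα)
  refine ⟨hu, ?_⟩
  rintro ⟨-, b, hb0, hab⟩
  apply hb0
  obtain ⟨v, hv⟩ := hu
  have := congrArg (fun x => (↑v⁻¹ : MonoidAlgebra F G) * x) hab
  simpa [← mul_assoc, ← hv, v.inv_mul] using this
end

section
/- Let G be a residually finite 2-group. Then the group algebra F₂[G] over the field F₂ with two elements contains no zero divisor whose support size is odd. -/
/-- `G` is a residually finite `p`-group: every nontrivial element is excluded from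
a normal subgroup of finite index such that every element of the quotient has
`p`-power order (i.e. the quotient is a finite `p`-group). -/
def IsResiduallyFinitePGroup (p : ℕ) (G : Type*) [Group G] : Prop :=
  ∀ g : G, g ≠ 1 → ∃ N : Subgroup G, N.Normal ∧ g ∉ N ∧ N.FiniteIndex ∧
    ∀ y : G, ∃ k : ℕ, y ^ p ^ k ∈ N

open Finset MonoidAlgebra

section Aux

variable {Q : Type*} [Group Q] [Fintype Q]

/-- The "sum of all group elements" element. -/
noncomputable def sigmaElem (Q : Type*) [Group Q] [Fintype Q] : MonoidAlgebra (ZMod 2) Q :=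
  ∑ q : Q, MonoidAlgebra.single q 1

lemma sigmaElem_apply (y : Q) : (sigmaElem Q).coeff y = 1 := by
  classical
  rw [sigmaElem, MonoidAlgebra.coeff_sum, Finset.sum_apply']
  simp only [MonoidAlgebra.coeff_single]
  rw [Finset.sum_eq_single y (fun b _ hb => Finsupp.single_eq_of_ne' hb)
    (fun h => absurd (mem_univ y) h)]
  simp

lemma sigmaElem_ne_zero : sigmaElem Q ≠ 0 := by
  intro h
  have := sigmaElem_apply (1 : Q)
  rw [h] at this
  simp at this

lemma mul_sigmaElem (a : MonoidAlgebra (ZMod 2) Q)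
    (ha : ∑ g ∈ a.coeff.support, a.coeff g = 1) : a * sigmaElem Q = sigmaElem Q := by
  classical
  have hsum : ∀ y : Q, ∑ g : Q, a.coeff g = 1 := by
    intro y
    rw [← ha]
    exact (Finset.sum_subset (Finset.subset_univ _)
      (fun x _ hx => Finsupp.notMem_support_iff.mp hx)).symm
  ext y
  rw [sigmaElem, Finset.mul_sum, MonoidAlgebra.coeff_sum, Finset.sum_apply']
  have : ∀ q : Q, (a * MonoidAlgebra.single q (1 : ZMod 2)).coeff y = a.coeff (y * q⁻¹) := by
    intro q
    rw [MonoidAlgebra.coeff_mul_single_apply, mul_one]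
  rw [Finset.sum_congr rfl (fun q _ => this q)]
  have hrhs : (∑ q : Q, MonoidAlgebra.single q (1 : ZMod 2)).coeff y = 1 := sigmaElem_apply y
  rw [hrhs]
  rw [← hsum y, ← Equiv.sum_comp ((Equiv.inv Q).trans (Equiv.mulLeft y)) (fun g => a.coeff g)]
  rfl

end Aux

lemma aux_finite {Q : Type*} [Group Q] [Finite Q] (hp : IsPGroup 2 Q)
    (a b : MonoidAlgebra (ZMod 2) Q) (ha : ∑ g ∈ a.coeff.support, a.coeff g = 1)
    (hab : a * b = 0) : b = 0 := by
  classical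
  cases nonempty_fintype Q
  by_contra hb
  set W := LinearMap.ker (LinearMap.mulLeft (ZMod 2) a) with hW
  have memW : ∀ x : MonoidAlgebra (ZMod 2) Q, x ∈ W ↔ a * x = 0 := by
    intro x; rw [hW, LinearMap.mem_ker, LinearMap.mulLeft_apply]
  letI act : MulAction Q W :=
    { smul := fun g x => ⟨x.1 * MonoidAlgebra.single g⁻¹ 1, (memW _).mpr (by
        rw [← mul_assoc, (memW x.1).mp x.2, zero_mul])⟩
      one_smul := fun x => Subtype.ext (by
        show x.1 * MonoidAlgebra.single (1:Q)⁻¹ (1:ZMod 2) = x.1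
        rw [inv_one, ← MonoidAlgebra.one_def, mul_one])
      mul_smul := fun g h x => Subtype.ext (by
        show x.1 * MonoidAlgebra.single ((g*h):Q)⁻¹ (1:ZMod 2)
            = (x.1 * MonoidAlgebra.single h⁻¹ 1) * MonoidAlgebra.single g⁻¹ 1
        rw [mul_assoc, MonoidAlgebra.single_mul_single, one_mul, mul_inv_rev]) }
  have smul_def : ∀ (g : Q) (x : W),
      (g • x).1 = x.1 * MonoidAlgebra.single g⁻¹ 1 := fun _ _ => rfl
  haveI : Finite (Q →₀ ZMod 2) :=
    Finite.of_injective (fun f => (f : Q → ZMod 2)) DFunLike.coe_injective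
  haveI : Finite (MonoidAlgebra (ZMod 2) Q) :=
    Finite.of_injective _ MonoidAlgebra.coeff_injective
  haveI : Finite W := Subtype.finite
  have hfix : MulAction.fixedPoints Q W = {0} := by
    ext x
    simp only [MulAction.mem_fixedPoints, Set.mem_singleton_iff]
    constructor
    · intro hx
      have hconst : ∀ q : Q, x.1.coeff q = x.1.coeff 1 := by
        intro q
        have h1 := congrArg (fun z : W => z.1.coeff (1 : Q)) (hx q)
        simp only [smul_def] at h1
        rw [MonoidAlgebra.coeff_mul_single_apply, mul_one, inv_inv, one_mul] at h1
        exact h1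
      by_cases h1 : x.1.coeff 1 = 0
      · apply Subtype.ext
        apply MonoidAlgebra.ext
        apply Finsupp.ext
        intro q
        rw [hconst q, h1]; rfl
      · exfalso
        have h1' : x.1.coeff 1 = 1 := by
          have : ∀ c : ZMod 2, c ≠ 0 → c = 1 := by decide
          exact this _ h1
        have hxs : x.1 = sigmaElem Q := by
          apply MonoidAlgebra.ext
          apply Finsupp.ext
          intro q
          rw [hconst q, h1', sigmaElem_apply]
        have := (memW x.1).mp x.2
        rw [hxs, mul_sigmaElem a ha] at this
        exact sigmaElem_ne_zero this
    · rintro rfl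
      intro g
      apply Subtype.ext
      rw [smul_def]
      show (0 : MonoidAlgebra (ZMod 2) Q) * _ = (0 : MonoidAlgebra (ZMod 2) Q)
      rw [zero_mul]
  have hcong := hp.card_modEq_card_fixedPoints W
  have hone : Nat.card (MulAction.fixedPoints Q W) = 1 := by
    rw [hfix]; simp
  haveI : Nontrivial W := by
    refine ⟨⟨b, (memW b).mpr hab⟩, 0, ?_⟩
    intro h
    exact hb (by simpa using congrArg Subtype.val h)
  haveI : Module.Finite (ZMod 2) W := Module.Finite.of_finite
  haveI := Fintype.ofFinite W
  have hcard : Fintype.card W = Fintype.card (ZMod 2) ^ Module.finrank (ZMod 2) W :=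
    Module.card_eq_pow_finrank
  have hpos : 0 < Module.finrank (ZMod 2) W := Module.finrank_pos
  have heven : Nat.card W % 2 = 0 := by
    rw [Nat.card_eq_fintype_card, hcard, ZMod.card]
    exact Nat.pow_mod 2 _ 2 ▸ (by
      cases' Nat.exists_eq_add_of_lt hpos with m hm
      rw [hm]
      simp [pow_succ, Nat.mul_mod])
  rw [Nat.ModEq, hone, heven] at hcong
  simp at hcong

theorem no_odd_support_zero_divisor_of_residually_finite_two_group
    {G : Type*} [Group G] (hres : IsResiduallyFinitePGroup 2 G) :
    ¬ ∃ α : MonoidAlgebra (ZMod 2) G, Odd α.coeff.support.card ∧ IsZeroDivisorElem α := by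
  classical
  rintro ⟨α, hodd, hα, β, hβ, hαβ⟩
  have key : ∀ p : G × G, ∃ N : Subgroup G, N.Normal ∧ (p.1 ≠ p.2 → p.1 * p.2⁻¹ ∉ N) ∧
      N.FiniteIndex ∧ ∀ y : G, ∃ k : ℕ, y ^ 2 ^ k ∈ N := by
    intro p
    by_cases hp : p.1 = p.2
    · exact ⟨⊤, inferInstance, fun h => absurd hp h, inferInstance,
        fun y => ⟨0, Subgroup.mem_top _⟩⟩
    · obtain ⟨N, hn1, hn2, hn3, hn4⟩ := hres (p.1 * p.2⁻¹)
        (by simpa [mul_inv_eq_one] using hp)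
      exact ⟨N, hn1, fun _ => hn2, hn3, hn4⟩
  choose Nf hnorm hsep hfin hpow using key
  set S : Finset (G × G) := β.coeff.support ×ˢ β.coeff.support with hS
  set N : Subgroup G := ⨅ p : S, Nf p with hN
  have hmem : ∀ x : G, x ∈ N ↔ ∀ p : S, x ∈ Nf p := fun x => Subgroup.mem_iInf
  haveI hNnormal : N.Normal := by
    constructor
    intro n hn g
    rw [hmem] at hn ⊢
    exact fun p => (hnorm p).conj_mem n (hn p) g
  haveI hNfin : N.FiniteIndex := Subgroup.finiteIndex_iInf fun p => hfin p
  have hNpow : ∀ y : G, ∃ k, y ^ 2 ^ k ∈ N := by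
    intro y
    choose k hk using fun p : S => hpow p y
    refine ⟨Finset.univ.sup k, (hmem _).mpr fun p => ?_⟩
    have h2 : (2:ℕ) ^ (Finset.univ.sup k) = 2 ^ (k p) * 2 ^ (Finset.univ.sup k - k p) := by
      rw [← pow_add, Nat.add_sub_cancel' (Finset.le_sup (Finset.mem_univ p))]
    rw [h2, pow_mul]
    exact Subgroup.pow_mem _ (hk p) _
  have hQp : IsPGroup 2 (G ⧸ N) := by
    intro q
    obtain ⟨y, rfl⟩ := QuotientGroup.mk'_surjective N q
    obtain ⟨k, hk⟩ := hNpow y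
    exact ⟨k, by rw [← map_pow]; exact (QuotientGroup.eq_one_iff _).mpr hk⟩
  set φ := MonoidAlgebra.mapDomainRingHom (ZMod 2) (QuotientGroup.mk' N) with hφ
  -- injectivity of mk' on the support of β
  have hinj : Set.InjOn (QuotientGroup.mk' N) (β.coeff.support : Set G) := by
    intro x hx y hy hxy
    by_contra hne
    have hxN : x * y⁻¹ ∈ N := by
      have : (x : G ⧸ N) = (y : G ⧸ N) := hxy
      rw [QuotientGroup.eq_iff_div_mem, div_eq_mul_inv] at this
      exact this
    have : x * y⁻¹ ∈ Nf (x, y) :=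
      (hmem _).mp hxN ⟨(x, y), Finset.mem_product.mpr ⟨hx, hy⟩⟩
    exact hsep (x, y) hne this
  have hφβ : φ β ≠ 0 := by
    obtain ⟨g0, hg0⟩ : β.coeff.support.Nonempty := Finsupp.support_nonempty_iff.mpr
      (fun h => hβ (MonoidAlgebra.coeff_injective (by rw [h]; rfl)))
    intro h
    have happ : (φ β).coeff (QuotientGroup.mk' N g0) = β.coeff g0 :=
      Finsupp.mapDomain_apply' (↑β.coeff.support) _ le_rfl hinj hg0
    rw [h] at happ
    exact Finsupp.mem_support_iff.mp hg0 happ.symm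
  have hsum : ∑ q ∈ (φ α).coeff.support, (φ α).coeff q = 1 := by
    have h1 : (Finsupp.mapDomain (QuotientGroup.mk' N) α.coeff).sum (fun _ m => m)
        = α.coeff.sum fun _ m => m :=
      Finsupp.sum_mapDomain_index (fun _ => rfl) (fun _ _ _ => rfl)
    have h2 : ∑ g ∈ α.coeff.support, α.coeff g = 1 := by
      have hall : ∀ g ∈ α.coeff.support, α.coeff g = 1 := by
        intro g hg
        have : ∀ c : ZMod 2, c ≠ 0 → c = 1 := by decide
        exact this _ (Finsupp.mem_support_iff.mp hg)
      rw [Finset.sum_congr rfl hall, Finset.sum_const, nsmul_eq_mul, mul_one]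
      obtain ⟨m, hm⟩ := hodd
      rw [hm]
      push_cast
      rw [show (2 : ZMod 2) = 0 from rfl]
      ring
    calc ∑ q ∈ (φ α).coeff.support, (φ α).coeff q = (φ α).coeff.sum (fun _ m => m) := rfl
      _ = α.coeff.sum fun _ m => m := h1
      _ = 1 := h2
  exact hφβ (aux_finite hQp (φ α) (φ β) hsum (by rw [← map_mul, hαβ, map_zero]))
end

section
/- For a positive integer n, the group algebra F₂[ℤ/nℤ] contains a zero divisor α with |supp(α)| = 3 if and only if there exists an odd positive integer t dividing n such that gcd(1 + X^t, 1 + (1 + X)^t), computed in the polynomial ring F₂[X], has degree greater than 1. -/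
open Polynomial

set_option linter.unusedSectionVars false

namespace SuppThreeAux

noncomputable section

variable (n : ℕ) [NeZero n]

abbrev R (n : ℕ) := MonoidAlgebra (ZMod 2) (Multiplicative (ZMod n))

def gen : R n :=
  MonoidAlgebra.of (ZMod 2) (Multiplicative (ZMod n)) (Multiplicative.ofAdd (1 : ZMod n))

def pr : (ZMod 2)[X] →ₐ[ZMod 2] R n := Polynomial.aeval (gen n)

lemma gen_pow (k : ℕ) :
    gen n ^ k = MonoidAlgebra.single (Multiplicative.ofAdd ((k : ZMod n))) (1 : ZMod 2) := by
  have h1 : ((k : ZMod n)) = k • (1 : ZMod n) := by simp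
  rw [gen, ← map_pow, h1, ofAdd_nsmul, MonoidAlgebra.of_apply]

lemma pr_monomial (k : ℕ) (c : ZMod 2) :
    pr n (monomial k c) = MonoidAlgebra.single (Multiplicative.ofAdd ((k : ZMod n))) c := by
  rw [pr, aeval_monomial, gen_pow]
  rw [show (algebraMap (ZMod 2) (R n)) c = MonoidAlgebra.single 1 c from by
    rw [MonoidAlgebra.coe_algebraMap]; simp]
  rw [MonoidAlgebra.single_mul_single, one_mul, mul_one]

lemma pr_X_pow (k : ℕ) :
    pr n (X ^ k) = MonoidAlgebra.single (Multiplicative.ofAdd ((k : ZMod n))) (1 : ZMod 2) := by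
  have := pr_monomial n k 1
  rwa [← Polynomial.X_pow_eq_monomial] at this

lemma pr_apply_coeff (P : (ZMod 2)[X]) (hP : P.natDegree < n) (j : ℕ) (hj : j < n) :
    (pr n P).coeff (Multiplicative.ofAdd ((j : ZMod n))) = P.coeff j := by
  classical
  have key : (pr n P) = ∑ i ∈ P.support,
      MonoidAlgebra.single (Multiplicative.ofAdd ((i : ZMod n))) (P.coeff i) := by
    conv_lhs => rw [P.as_sum_support]
    rw [map_sum]
    exact Finset.sum_congr rfl fun i _ => pr_monomial n i _
  rw [key, MonoidAlgebra.coeff_sum, Finsupp.finset_sum_apply]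
  have step : ∀ i ∈ P.support,
      (MonoidAlgebra.single (M := Multiplicative (ZMod n)) (Multiplicative.ofAdd ((i : ZMod n)))
        (P.coeff i)).coeff (Multiplicative.ofAdd ((j : ZMod n))) = if i = j then P.coeff i else 0 := by
    intro i hi
    have hi' : i < n := lt_of_le_of_lt (Polynomial.le_natDegree_of_mem_supp i hi) hP
    rw [MonoidAlgebra.coeff_single, Finsupp.single_apply]
    by_cases hij : i = j
    · simp [hij]
    · have hne : (Multiplicative.ofAdd ((i : ZMod n))) ≠ (Multiplicative.ofAdd ((j : ZMod n))) := by
        intro hc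
        apply hij
        have hc' : ((i : ZMod n)) = ((j : ZMod n)) := Multiplicative.ofAdd.injective hc
        have := congrArg ZMod.val hc'
        rwa [ZMod.val_cast_of_lt hi', ZMod.val_cast_of_lt hj] at this
      simp [hne, hij]
  rw [Finset.sum_congr rfl step, Finset.sum_ite_eq' P.support j (fun i => P.coeff i)]
  by_cases h : j ∈ P.support
  · simp [h]
  · simp [h, Polynomial.notMem_support_iff.mp h]

lemma pr_eq_zero_small {P : (ZMod 2)[X]} (hP : P.natDegree < n) (h : pr n P = 0) : P = 0 := by
  ext j
  rw [Polynomial.coeff_zero]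
  by_cases hj : j < n
  · have h0 : (pr n P).coeff (Multiplicative.ofAdd ((j : ZMod n))) = 0 := by rw [h]; rfl
    rwa [pr_apply_coeff n P hP j hj] at h0
  · exact Polynomial.coeff_eq_zero_of_natDegree_lt (lt_of_lt_of_le hP (not_lt.mp hj))

lemma monic_Xn : Monic ((X : (ZMod 2)[X]) ^ n - 1) := by
  simpa using monic_X_pow_sub_C (1 : ZMod 2) (NeZero.ne n)

lemma pr_Xn : pr n ((X : (ZMod 2)[X]) ^ n - 1) = 0 := by
  rw [map_sub, map_one, map_pow]
  have : pr n (X : (ZMod 2)[X]) = gen n := by rw [pr]; exact aeval_X _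
  rw [this, gen_pow, ZMod.natCast_self, ofAdd_zero, ← MonoidAlgebra.one_def, sub_self]

lemma Xn_sub_one_dvd {P : (ZMod 2)[X]} (h : pr n P = 0) : ((X : (ZMod 2)[X]) ^ n - 1) ∣ P := by
  have hmonic := monic_Xn n
  rw [← Polynomial.modByMonic_eq_zero_iff_dvd hmonic]
  have hdeg : (P %ₘ (X ^ n - 1)).natDegree < n := by
    by_cases h0 : P %ₘ (X ^ n - 1) = 0
    · rw [h0]; simpa using Nat.pos_of_ne_zero (NeZero.ne n)
    · rw [natDegree_lt_iff_degree_lt h0]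
      have := Polynomial.degree_modByMonic_lt P hmonic
      rwa [show ((X : (ZMod 2)[X]) ^ n - 1) = X ^ n - C 1 by rw [map_one],
        degree_X_pow_sub_C (Nat.pos_of_ne_zero (NeZero.ne n))] at this
  apply pr_eq_zero_small n hdeg
  have hdiv := Polynomial.modByMonic_add_div P ((X : (ZMod 2)[X]) ^ n - 1)
  have : pr n (P %ₘ (X ^ n - 1)) + pr n ((X ^ n - 1) * (P /ₘ (X ^ n - 1))) = pr n P := by
    rw [← map_add, hdiv]
  rw [map_mul, pr_Xn, zero_mul, add_zero] at this
  rw [this, h]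

lemma pr_surjective : Function.Surjective (pr n) := by
  intro y
  induction y using MonoidAlgebra.induction with
  | zero => exact ⟨0, map_zero _⟩
  | single_add a b f _ _ ih =>
    obtain ⟨P, hP⟩ := ih
    refine ⟨monomial (Multiplicative.toAdd a).val b + P, ?_⟩
    rw [map_add, hP, pr_monomial]
    congr 2
    rw [ZMod.natCast_val, ZMod.cast_id]
    exact ofAdd_toAdd a

lemma zmod2_cases : ∀ c : ZMod 2, c = 0 ∨ c = 1 := by decide

lemma forward (α : R n) (h3 : α.coeff.support.card = 3) (β : R n) (hβ : β ≠ 0)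
    (hmul : α * β = 0) :
    ∃ t : ℕ, 0 < t ∧ Odd t ∧ t ∣ n ∧
      1 < (EuclideanDomain.gcd (1 + X ^ t) (1 + (1 + X) ^ t) : (ZMod 2)[X]).degree := by
  classical
  obtain ⟨x, y, z, hxy, hxz, hyz, hsupp⟩ := Finset.card_eq_three.mp h3
  have hcoeff : ∀ w ∈ α.coeff.support, α.coeff w = 1 := by
    intro w hw
    have h1 : α.coeff w ≠ 0 := Finsupp.mem_support_iff.mp hw
    have : ∀ c : ZMod 2, c ≠ 0 → c = 1 := by decide
    exact this _ h1
  -- α as sum of three singles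
  have hxmem : x ∈ α.coeff.support := by rw [hsupp]; simp
  have hymem : y ∈ α.coeff.support := by rw [hsupp]; simp
  have hzmem : z ∈ α.coeff.support := by rw [hsupp]; simp
  have hα_eq : α = MonoidAlgebra.single x 1 + MonoidAlgebra.single y 1
      + MonoidAlgebra.single z 1 := by
    conv_lhs => rw [← MonoidAlgebra.sum_coeff_single α]
    rw [Finsupp.sum, hsupp]
    rw [show ({x, y, z} : Finset (Multiplicative (ZMod n))) = insert x (insert y {z}) from rfl]
    rw [Finset.sum_insert (by simp [hxy, hxz]), Finset.sum_insert (by simp [hyz]),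
      Finset.sum_singleton, hcoeff x hxmem, hcoeff y hymem, hcoeff z hzmem, add_assoc]
  set ex := (Multiplicative.toAdd x).val with hex
  set ey := (Multiplicative.toAdd y).val with hey
  set ez := (Multiplicative.toAdd z).val with hez
  have hsingle : ∀ w : Multiplicative (ZMod n),
      pr n (X ^ (Multiplicative.toAdd w).val) = MonoidAlgebra.single w 1 := by
    intro w
    rw [pr_X_pow]
    congr 1
    rw [ZMod.natCast_val, ZMod.cast_id]
    exact ofAdd_toAdd w
  set A : (ZMod 2)[X] := X ^ ex + X ^ ey + X ^ ez with hA
  have hprA : pr n A = α := by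
    rw [hA, map_add, map_add, hsingle x, hsingle y, hsingle z, hα_eq]
  obtain ⟨B, hB⟩ := pr_surjective n β
  have hABdvd : ((X : (ZMod 2)[X]) ^ n - 1) ∣ A * B := by
    apply Xn_sub_one_dvd
    rw [map_mul, hprA, hB, hmul]
  have hXn_ne : ((X : (ZMod 2)[X]) ^ n - 1) ≠ 0 := (monic_Xn n).ne_zero
  have hNotCop : ¬ IsCoprime A ((X : (ZMod 2)[X]) ^ n - 1) := by
    intro hcop
    apply hβ
    have hdvdB : ((X : (ZMod 2)[X]) ^ n - 1) ∣ B :=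
      (hcop.symm).dvd_of_dvd_mul_left hABdvd
    obtain ⟨Q, hQ⟩ := hdvdB
    rw [← hB, hQ, map_mul, pr_Xn, zero_mul]
  set d := EuclideanDomain.gcd A ((X : (ZMod 2)[X]) ^ n - 1) with hd
  have hdnu : ¬ IsUnit d := fun h => hNotCop (EuclideanDomain.gcd_isUnit_iff.mp h)
  have hd0 : d ≠ 0 := fun h => hXn_ne (EuclideanDomain.gcd_eq_zero_iff.mp h).2
  obtain ⟨p, hp, hpd⟩ := WfDvdMonoid.exists_irreducible_factor hdnu hd0
  have hpA : p ∣ A := hpd.trans (EuclideanDomain.gcd_dvd_left _ _)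
  have hpX : p ∣ ((X : (ZMod 2)[X]) ^ n - 1) := hpd.trans (EuclideanDomain.gcd_dvd_right _ _)
  haveI := Fact.mk hp
  set K := AdjoinRoot p with hK
  set θ : K := AdjoinRoot.root p with hθ
  haveI : CharP K 2 := charP_of_injective_algebraMap (algebraMap (ZMod 2) K).injective 2
  have h2 : (2 : K) = 0 := by
    have := CharP.cast_eq_zero K 2
    simpa using this
  have hθn : θ ^ n = 1 := by
    have : (aeval θ) ((X : (ZMod 2)[X]) ^ n - 1) = 0 := by
      rw [AdjoinRoot.aeval_eq, AdjoinRoot.mk_eq_zero]; exact hpX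
    rw [map_sub, map_one, map_pow, aeval_X] at this
    exact sub_eq_zero.mp this
  have hθ0 : θ ≠ 0 := by
    intro h0
    have : (0 : K) ^ n = 1 := by rw [← h0]; exact hθn
    rw [zero_pow (NeZero.ne n)] at this
    exact zero_ne_one this
  have hA0 : θ ^ ex + θ ^ ey + θ ^ ez = 0 := by
    have : (aeval θ) A = 0 := by
      rw [hθ, AdjoinRoot.aeval_eq, AdjoinRoot.mk_eq_zero]; exact hpA
    simpa [hA] using this
  set m := ordCompl[2] n with hm
  have hm0 : 0 < m := Nat.ordCompl_pos 2 (NeZero.ne n)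
  have hmdvd : m ∣ n := Nat.ordCompl_dvd n 2
  have hmodd : Odd m := by
    have := Nat.not_dvd_ordCompl Nat.prime_two (NeZero.ne n)
    rw [Nat.odd_iff]
    omega
  haveI : Fact (Nat.Prime 2) := ⟨Nat.prime_two⟩
  have hθm : θ ^ m = 1 := by
    have hnk : 2 ^ (n.factorization 2) * m = n := Nat.ordProj_mul_ordCompl_eq_self n 2
    have hpow : (θ ^ m) ^ (2 ^ (n.factorization 2)) = 1 := by
      rw [← pow_mul, mul_comm, hnk, hθn]
    have hsub := sub_pow_char_pow (R := K) (p := 2) (θ ^ m) 1 (n.factorization 2)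
    rw [hpow, one_pow, sub_self] at hsub
    have := pow_eq_zero_iff (a := θ ^ m - 1) (n := 2 ^ (n.factorization 2))
      (pow_ne_zero _ (two_ne_zero)) |>.mp hsub
    rwa [sub_eq_zero] at this
  have hθex : θ ^ ex ≠ 0 := pow_ne_zero _ hθ0
  set u : K := θ ^ ey / θ ^ ex with hu
  set v : K := θ ^ ez / θ ^ ex with hv
  have h1uv : 1 + u + v = 0 := by
    rw [hu, hv]
    rw [add_assoc, ← add_div, one_add_div hθex, div_eq_zero_iff]
    left
    linear_combination hA0
  have hpowm : ∀ e : ℕ, (θ ^ e) ^ m = 1 := by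
    intro e
    rw [← pow_mul, mul_comm, pow_mul, hθm, one_pow]
  have hum : u ^ m = 1 := by rw [hu, div_pow, hpowm, hpowm]; norm_num
  have hvm : v ^ m = 1 := by rw [hv, div_pow, hpowm, hpowm]; norm_num
  have hu0 : u ≠ 0 := by
    intro h0
    rw [h0, zero_pow hm0.ne'] at hum
    exact zero_ne_one hum
  have hv0 : v ≠ 0 := by
    intro h0
    rw [h0, zero_pow hm0.ne'] at hvm
    exact zero_ne_one hvm
  have hvu : v = 1 + u := by linear_combination h1uv - h2 - u * h2
  have hu1 : u ≠ 1 := by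
    intro h1
    apply hv0
    rw [hvu, h1]
    linear_combination h2
  -- minimal polynomial of u
  have hint : IsIntegral (ZMod 2) u := by
    refine ⟨X ^ m - C 1, monic_X_pow_sub_C 1 hm0.ne', ?_⟩
    rw [← Polynomial.aeval_def, map_sub, map_pow, aeval_X, aeval_C, hum]
    simp
  set q := minpoly (ZMod 2) u with hq
  have hq1 : q ∣ 1 + X ^ m := by
    apply minpoly.dvd
    rw [map_add, map_one, map_pow, aeval_X, hum]
    linear_combination h2
  have hq2 : q ∣ 1 + (1 + X) ^ m := by
    apply minpoly.dvd
    rw [map_add, map_one, map_pow, map_add, map_one, aeval_X, ← hvu, hvm]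
    linear_combination h2
  have hq0 : q ≠ 0 := minpoly.ne_zero hint
  have hqdeg : 2 ≤ q.natDegree := by
    have hpos : 0 < q.natDegree := minpoly.natDegree_pos hint
    by_contra hle
    have h1 : q.natDegree = 1 := by omega
    have hmonic : q.Monic := minpoly.monic hint
    have hXC : q = X + C (q.coeff 0) := hmonic.eq_X_add_C h1
    have haev : (aeval u) q = 0 := minpoly.aeval _ _
    rw [hXC, map_add, aeval_X, aeval_C] at haev
    rcases zmod2_cases (q.coeff 0) with hc | hc
    · rw [hc] at haev; simp at haev; exact hu0 haev
    · rw [hc] at haev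
      apply hu1
      rw [map_one] at haev
      linear_combination haev - h2
  refine ⟨m, hm0, hmodd, hmdvd, ?_⟩
  have hgcd_ne : (EuclideanDomain.gcd (1 + X ^ m) (1 + (1 + X) ^ m) : (ZMod 2)[X]) ≠ 0 := by
    intro h0
    have := (EuclideanDomain.gcd_eq_zero_iff.mp h0).1
    have hc : ((1 : (ZMod 2)[X]) + X ^ m).coeff 0 = 1 := by
      rw [coeff_add, coeff_one, coeff_X_pow]
      simp [hm0.ne]
    rw [this] at hc
    simp at hc
  have hqgcd : q ∣ EuclideanDomain.gcd (1 + X ^ m) (1 + (1 + X) ^ m) :=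
    EuclideanDomain.dvd_gcd hq1 hq2
  have hle := Polynomial.degree_le_of_dvd hqgcd hgcd_ne
  calc (1 : WithBot ℕ) < (q.natDegree : WithBot ℕ) := by
        have h1 : 1 < q.natDegree := by omega
        exact_mod_cast h1
    _ = q.degree := (Polynomial.degree_eq_natDegree hq0).symm
    _ ≤ _ := hle

lemma backward (t : ℕ) (ht : 0 < t) (htn : t ∣ n)
    (hdeg : 1 < (EuclideanDomain.gcd (1 + X ^ t) (1 + (1 + X) ^ t) : (ZMod 2)[X]).degree) :
    ∃ α : R n, α.coeff.support.card = 3 ∧ α ≠ 0 ∧ ∃ β, β ≠ 0 ∧ α * β = 0 := by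
  classical
  set d := (EuclideanDomain.gcd (1 + X ^ t) (1 + (1 + X) ^ t) : (ZMod 2)[X]) with hd
  have hd0 : d ≠ 0 := by
    intro h0
    rw [h0] at hdeg
    simp [Polynomial.degree_zero] at hdeg
  have hdnu : ¬ IsUnit d := by
    intro hun
    rw [Polynomial.isUnit_iff_degree_eq_zero.mp hun] at hdeg
    norm_num at hdeg
  obtain ⟨p, hp, hpd⟩ := WfDvdMonoid.exists_irreducible_factor hdnu hd0
  have hp1 : p ∣ 1 + X ^ t := hpd.trans (EuclideanDomain.gcd_dvd_left _ _)
  have hp2 : p ∣ 1 + (1 + X) ^ t := hpd.trans (EuclideanDomain.gcd_dvd_right _ _)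
  haveI := Fact.mk hp
  set K := AdjoinRoot p with hK
  set u : K := AdjoinRoot.root p with huroot
  haveI : CharP K 2 := charP_of_injective_algebraMap (algebraMap (ZMod 2) K).injective 2
  have h2 : (2 : K) = 0 := by
    have := CharP.cast_eq_zero K 2
    simpa using this
  have hut : u ^ t = 1 := by
    have : (aeval u) ((1 : (ZMod 2)[X]) + X ^ t) = 0 := by
      rw [huroot, AdjoinRoot.aeval_eq, AdjoinRoot.mk_eq_zero]; exact hp1
    rw [map_add, map_one, map_pow, aeval_X] at this
    linear_combination this - h2
  have hvt : ((1 : K) + u) ^ t = 1 := by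
    have : (aeval u) ((1 : (ZMod 2)[X]) + (1 + X) ^ t) = 0 := by
      rw [huroot, AdjoinRoot.aeval_eq, AdjoinRoot.mk_eq_zero]; exact hp2
    rw [map_add, map_one, map_pow, map_add, map_one, aeval_X] at this
    linear_combination this - h2
  have hu0 : u ≠ 0 := by
    intro h0
    rw [h0, zero_pow ht.ne'] at hut
    exact zero_ne_one hut
  have hu1 : u ≠ 1 := by
    intro h1
    rw [h1] at hvt
    have h11 : (1 : K) + 1 = 0 := by linear_combination h2
    rw [h11, zero_pow ht.ne'] at hvt
    exact zero_ne_one hvt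
  have hv0 : (1 : K) + u ≠ 0 := by
    intro h0
    rw [h0, zero_pow ht.ne'] at hvt
    exact zero_ne_one hvt
  -- K is a finite field
  haveI : Module.Finite (ZMod 2) K := PowerBasis.finite (AdjoinRoot.powerBasis hp.ne_zero)
  haveI : Finite K := Module.finite_of_finite (ZMod 2)
  -- units
  have hUu : IsUnit u := IsUnit.of_mul_eq_one (u ^ (t - 1)) (by
    rw [← pow_succ']
    rw [show t - 1 + 1 = t by omega, hut])
  have hVu : IsUnit ((1 : K) + u) := IsUnit.of_mul_eq_one (((1 : K) + u) ^ (t - 1)) (by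
    rw [← pow_succ']
    rw [show t - 1 + 1 = t by omega, hvt])
  set U := hUu.unit with hU
  set V := hVu.unit with hV
  have hUt : U ^ t = 1 := by
    ext
    rw [Units.val_pow_eq_pow_val, hUu.unit_spec, hut, Units.val_one]
  have hVt : V ^ t = 1 := by
    ext
    rw [Units.val_pow_eq_pow_val, hVu.unit_spec, hvt, Units.val_one]
  set H := Subgroup.closure ({U, V} : Set Kˣ) with hH
  have hHle : H ≤ (powMonoidHom t : Kˣ →* Kˣ).ker := by
    rw [hH, Subgroup.closure_le]
    rintro w (rfl | rfl)
    · rw [SetLike.mem_coe, MonoidHom.mem_ker]; exact hUt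
    · rw [SetLike.mem_coe, MonoidHom.mem_ker]; exact hVt
  obtain ⟨ζH, hζH⟩ := IsCyclic.exists_monoid_generator (α := H)
  set ζ : Kˣ := (ζH : Kˣ) with hζ
  have hζt : ζ ^ t = 1 := by
    have hmem : ζ ∈ H := ζH.2
    have := hHle hmem
    rwa [MonoidHom.mem_ker] at this
  have hζn : ζ ^ n = 1 := by
    obtain ⟨c, rfl⟩ := htn
    rw [pow_mul, hζt, one_pow]
  have hUmem : U ∈ H := Subgroup.subset_closure (by simp)
  have hVmem : V ∈ H := Subgroup.subset_closure (by simp)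
  obtain ⟨a, ha⟩ := Submonoid.mem_powers_iff _ _ |>.mp (hζH ⟨U, hUmem⟩)
  obtain ⟨b, hb⟩ := Submonoid.mem_powers_iff _ _ |>.mp (hζH ⟨V, hVmem⟩)
  have hζa : ζ ^ a = U := by
    have := congrArg (Subtype.val) ha
    rwa [SubmonoidClass.coe_pow] at this
  have hζb : ζ ^ b = V := by
    have := congrArg (Subtype.val) hb
    rwa [SubmonoidClass.coe_pow] at this
  set zz : K := (ζ : K) with hzz
  have hza : zz ^ a = u := by
    have := congrArg Units.val hζa
    rwa [Units.val_pow_eq_pow_val, hUu.unit_spec] at this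
  have hzb : zz ^ b = 1 + u := by
    have := congrArg Units.val hζb
    rwa [Units.val_pow_eq_pow_val, hVu.unit_spec] at this
  have hzn : zz ^ n = 1 := by
    have := congrArg Units.val hζn
    rwa [Units.val_pow_eq_pow_val, Units.val_one] at this
  -- distinctness in ZMod n
  have hcast_pow : ∀ a b : ℕ, (a : ZMod n) = (b : ZMod n) → zz ^ a = zz ^ b := by
    intro a' b' hab
    have hmod : a' % n = b' % n := (ZMod.natCast_eq_natCast_iff a' b' n).mp hab
    rw [pow_eq_pow_mod a' hzn, pow_eq_pow_mod b' hzn, hmod]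
  have ha0 : ((a : ZMod n)) ≠ 0 := by
    intro h0
    have : zz ^ a = zz ^ 0 := hcast_pow a 0 (by simpa using h0)
    rw [hza, pow_zero] at this
    exact hu1 this
  have hb0 : ((b : ZMod n)) ≠ 0 := by
    intro h0
    have : zz ^ b = zz ^ 0 := hcast_pow b 0 (by simpa using h0)
    rw [hzb, pow_zero] at this
    apply hu0
    linear_combination this
  have hab : ((a : ZMod n)) ≠ ((b : ZMod n)) := by
    intro hE
    have : zz ^ a = zz ^ b := hcast_pow a b hE
    rw [hza, hzb] at this
    have h10 : (1 : K) = 0 := by linear_combination -this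
    exact one_ne_zero h10
  -- the evaluation morphism to K
  have hfn : (zmultiplesHom (Additive Kˣ) (Additive.ofMul ζ)) ((n : ℤ)) = 0 := by
    rw [zmultiplesHom_apply, ← ofMul_zpow, zpow_natCast, hζn, ofMul_one]
  set F : ZMod n →+ Additive Kˣ :=
    ZMod.lift n ⟨zmultiplesHom (Additive Kˣ) (Additive.ofMul ζ), hfn⟩ with hF
  set ψ : Multiplicative (ZMod n) →* K :=
    (Units.coeHom K).comp (AddMonoidHom.toMultiplicativeLeft F) with hψdef
  have hψ : ∀ k : ℕ, ψ (Multiplicative.ofAdd ((k : ZMod n))) = zz ^ k := by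
    intro k
    have h1 : ψ (Multiplicative.ofAdd ((k : ZMod n)))
        = ((Additive.toMul (F ((k : ZMod n))) : Kˣ) : K) := rfl
    rw [h1]
    have hcast : ((k : ZMod n)) = (((k : ℤ) : ZMod n)) := by push_cast; rfl
    rw [hcast, hF, ZMod.lift_coe, zmultiplesHom_apply, ← ofMul_zpow, toMul_ofMul,
      zpow_natCast, hzz, Units.val_pow_eq_pow_val]
  set Φ : R n →ₐ[ZMod 2] K := MonoidAlgebra.lift (ZMod 2) K (Multiplicative (ZMod n)) ψ with hΦ
  set x0 : Multiplicative (ZMod n) := 1 with hx0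
  set y0 : Multiplicative (ZMod n) := Multiplicative.ofAdd ((a : ZMod n)) with hy0
  set z0 : Multiplicative (ZMod n) := Multiplicative.ofAdd ((b : ZMod n)) with hz0
  have hx0' : x0 = Multiplicative.ofAdd (((0 : ℕ) : ZMod n)) := by rw [hx0]; simp
  have hxy : x0 ≠ y0 := by
    rw [hx0', hy0]
    intro h
    have := Multiplicative.ofAdd.injective h
    exact ha0 (by simpa using this.symm)
  have hxz : x0 ≠ z0 := by
    rw [hx0', hz0]
    intro h
    have := Multiplicative.ofAdd.injective h
    exact hb0 (by simpa using this.symm)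
  have hyz : y0 ≠ z0 := by
    rw [hy0, hz0]
    intro h
    exact hab (Multiplicative.ofAdd.injective h)
  set α : R n := MonoidAlgebra.single x0 1
      + (MonoidAlgebra.single y0 1 + MonoidAlgebra.single z0 1) with hα
  have hs1 : (MonoidAlgebra.single y0 (1 : ZMod 2) + MonoidAlgebra.single z0 1).coeff.support
      = {y0, z0} := by
    rw [MonoidAlgebra.coeff_add, MonoidAlgebra.coeff_single, MonoidAlgebra.coeff_single,
      Finsupp.support_add_eq]
    · rw [Finsupp.support_single_ne_zero _ one_ne_zero,
        Finsupp.support_single_ne_zero _ one_ne_zero]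
      rfl
    · rw [Finsupp.support_single_ne_zero _ one_ne_zero,
        Finsupp.support_single_ne_zero _ one_ne_zero]
      simp [hyz, hyz.symm]
  have hsupp : α.coeff.support = {x0, y0, z0} := by
    rw [hα, MonoidAlgebra.coeff_add, Finsupp.support_add_eq]
    · rw [MonoidAlgebra.coeff_single, Finsupp.support_single_ne_zero _ one_ne_zero, hs1]
      rfl
    · rw [MonoidAlgebra.coeff_single, Finsupp.support_single_ne_zero _ one_ne_zero, hs1]
      simp [hxy, hxz, hxy.symm, hxz.symm]
  have hcard : α.coeff.support.card = 3 := by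
    rw [hsupp, Finset.card_eq_three]
    exact ⟨x0, y0, z0, hxy, hxz, hyz, rfl⟩
  have hα0 : α ≠ 0 := by
    intro h
    have hc := hcard
    rw [h] at hc
    simp at hc
  have hΦx : Φ (MonoidAlgebra.single x0 (1 : ZMod 2)) = 1 := by
    rw [hΦ, MonoidAlgebra.lift_single, one_smul, hx0', hψ, pow_zero]
  have hΦy : Φ (MonoidAlgebra.single y0 (1 : ZMod 2)) = u := by
    rw [hΦ, MonoidAlgebra.lift_single, one_smul, hy0, hψ, hza]
  have hΦz : Φ (MonoidAlgebra.single z0 (1 : ZMod 2)) = 1 + u := by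
    rw [hΦ, MonoidAlgebra.lift_single, one_smul, hz0, hψ, hzb]
  have hΦα : Φ α = 0 := by
    rw [hα, map_add, map_add, hΦx, hΦy, hΦz]
    linear_combination h2 + u * h2
  have hnu : ¬ IsUnit α := by
    intro hun
    have := hun.map Φ
    rw [hΦα] at this
    exact not_isUnit_zero this
  haveI : Finite (R n) := by
    have : Finite (Multiplicative (ZMod n) →₀ ZMod 2) :=
      Finite.of_injective (fun f => (f : Multiplicative (ZMod n) → ZMod 2)) DFunLike.coe_injective
    exact Finite.of_injective _ MonoidAlgebra.coeff_injective
  refine ⟨α, hcard, hα0, ?_⟩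
  by_cases hinj : Function.Injective (fun w : R n => α * w)
  · obtain ⟨w, hw⟩ := Finite.injective_iff_surjective.mp hinj 1
    exact absurd (IsUnit.of_mul_eq_one w hw) hnu
  · obtain ⟨w1, w2, hw, hne⟩ := Function.not_injective_iff.mp hinj
    refine ⟨w1 - w2, sub_ne_zero_of_ne hne, ?_⟩
    rw [mul_sub, sub_eq_zero]
    simpa using hw


end

end SuppThreeAux

theorem support_three_zero_divisor_iff_trinomial_gcd
    (n : ℕ) (hn : 0 < n) :
    (∃ α : MonoidAlgebra (ZMod 2) (Multiplicative (ZMod n)),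
        α.coeff.support.card = 3 ∧ α ≠ 0 ∧ ∃ β, β ≠ 0 ∧ α * β = 0) ↔
      ∃ t : ℕ, 0 < t ∧ Odd t ∧ t ∣ n ∧
        1 < (EuclideanDomain.gcd (1 + X ^ t) (1 + (1 + X) ^ t) : (ZMod 2)[X]).degree := by
  haveI : NeZero n := ⟨hn.ne'⟩
  constructor
  · rintro ⟨α, h3, hα, β, hβ, hm⟩
    exact SuppThreeAux.forward n α h3 β hβ hm
  · rintro ⟨t, ht, hodd, htn, hdeg⟩
    exact SuppThreeAux.backward n t ht htn hdeg
end

section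
/- Let G be a group, x ∈ G an element of finite order n > 2, and let α ∈ F₂[G] be equal to 1 + x + x^{−1} or to 1 + x + x². Suppose αβ = 0 for some nonzero β ∈ F₂[G] with 1 ∈ supp(β), where |supp(β)| is minimal among all nonzero γ ∈ F₂[G] with αγ = 0. Then β = β′ or β = β′·x^{−1}, where β′ := Σ_{i=0}^{k} x^{s_i} with k = |supp(β)| − 1, s₀ = 0, s₁ = 1, and s_i = s_{i−2} + 3 for all i ∈ {2, 3, …, k}. -/
private def sfun : ℕ → ℕ := fun i => 3 * (i / 2) + i % 2

private lemma sfun_image (m : ℕ) :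
    (Finset.range (2*m)).image sfun = (Finset.range (3*m)).filter (fun j => j % 3 ≠ 2) := by
  ext j
  simp only [Finset.mem_image, Finset.mem_filter, Finset.mem_range, sfun]
  constructor
  · rintro ⟨i, hi, rfl⟩; omega
  · rintro ⟨h1, h2⟩
    exact ⟨2*(j/3) + j % 3, by omega, by omega⟩

private lemma efun_image (m : ℕ) (hm : 1 ≤ m) :
    (Finset.range (2*m)).image (fun i => if i = 0 then 3*m - 1 else sfun i - 1)
      = (Finset.range (3*m)).filter (fun j => j % 3 ≠ 1) := by
  ext j
  simp only [Finset.mem_image, Finset.mem_filter, Finset.mem_range, sfun]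
  constructor
  · rintro ⟨i, hi, rfl⟩
    split <;> omega
  · rintro ⟨h1, h2⟩
    by_cases hj : j = 3*m - 1
    · exact ⟨0, by omega, by simp [hj]⟩
    · by_cases h0 : j % 3 = 0
      · exact ⟨2*(j/3)+1, by omega, by rw [if_neg (by omega)]; omega⟩
      · exact ⟨2*(j/3)+2, by omega, by rw [if_neg (by omega)]; omega⟩

private lemma pattern3 (g : ℕ → ZMod 2) (a b : ZMod 2)
    (h0 : g 0 = a) (h1 : g 1 = b) (hrec : ∀ j, g (j+2) = g (j+1) + g j) :
    ∀ j, g j = if j % 3 = 0 then a else if j % 3 = 1 then b else a + b := by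
  have c1 : ∀ u v : ZMod 2, v + u = u + v := by decide
  have c2 : ∀ u v : ZMod 2, (u + v) + v = u := by decide
  have c3 : ∀ u v : ZMod 2, u + (u + v) = v := by decide
  intro j
  induction j using Nat.strong_induction_on with
  | _ j ih =>
    match j, ih with
    | 0, _ => simpa using h0
    | 1, _ => simpa using h1
    | (k+2), ih =>
      rw [hrec k, ih (k+1) (by omega), ih k (by omega)]
      have h3 : k % 3 = 0 ∨ k % 3 = 1 ∨ k % 3 = 2 := by omega
      rcases h3 with h | h | h
      · rw [show (k+2)%3 = 2 by omega, show (k+1)%3 = 1 by omega, h]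
        simp only [if_pos rfl]
        norm_num
        exact c1 a b
      · rw [show (k+2)%3 = 0 by omega, show (k+1)%3 = 2 by omega, h]
        norm_num
        exact c2 a b
      · rw [show (k+2)%3 = 1 by omega, show (k+1)%3 = 0 by omega, h]
        norm_num
        exact c3 a b

private lemma pow_inj' {G : Type*} [Group G] (x : G) (n : ℕ) (hx : orderOf x = n)
    {i j : ℕ} (hi : i < n) (hj : j < n) (h : x ^ i = x ^ j) : i = j := by
  have := pow_eq_pow_iff_modEq.mp h
  rw [hx] at this
  have h2 : i % n = j % n := this
  rwa [Nat.mod_eq_of_lt hi, Nat.mod_eq_of_lt hj] at h2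


private lemma beta_eq_sum {G : Type*} [Group G] [DecidableEq G] (x : G) (n : ℕ) (hn : 0 < n) (hx : orderOf x = n)
    (β : MonoidAlgebra (ZMod 2) G)
    (hzp : ∀ a ∈ β.coeff.support, a ∈ Subgroup.zpowers x)
    (r : ℕ) (hpat : ∀ j : ℕ, β.coeff (x ^ j) = if j % 3 = r then 0 else 1) :
    β.coeff.support = ((Finset.range n).filter (fun j => j % 3 ≠ r)).image (x ^ ·) ∧
    β = ∑ j ∈ (Finset.range n).filter (fun j => j % 3 ≠ r),
          MonoidAlgebra.single (x ^ j) (1 : ZMod 2) := by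
  set T := (Finset.range n).filter (fun j => j % 3 ≠ r) with hT
  have hinj : ∀ i ∈ T, ∀ j ∈ T, x ^ i = x ^ j → i = j := by
    intro i hi j hj h
    simp only [hT, Finset.mem_filter, Finset.mem_range] at hi hj
    exact pow_inj' x n hx hi.1 hj.1 h
  have hsupp : β.coeff.support = T.image (x ^ ·) := by
    ext a
    simp only [Finsupp.mem_support_iff, Finset.mem_image, hT, Finset.mem_filter,
      Finset.mem_range]
    constructor
    · intro ha
      obtain ⟨k, hk⟩ := Subgroup.mem_zpowers_iff.mp (hzp a (Finsupp.mem_support_iff.mpr ha))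
      have hnn : (0:ℤ) ≤ k % (n:ℤ) := Int.emod_nonneg k (by exact_mod_cast hn.ne')
      have hlt : k % (n:ℤ) < (n:ℤ) := Int.emod_lt_of_pos k (by exact_mod_cast hn)
      have hxj : x ^ ((k % (n:ℤ)).toNat) = a := by
        rw [← hk, ← zpow_natCast, Int.toNat_of_nonneg hnn, ← hx, zpow_mod_orderOf]
      refine ⟨(k % (n:ℤ)).toNat, ⟨by omega, ?_⟩, hxj⟩
      intro hmod3
      rw [← hxj, hpat, if_pos hmod3] at ha
      exact ha rfl
    · rintro ⟨j, ⟨hj, hj3⟩, rfl⟩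
      rw [hpat, if_neg hj3]
      exact one_ne_zero
  refine ⟨hsupp, ?_⟩
  have h1 : β = ∑ a ∈ β.coeff.support, MonoidAlgebra.single a (β.coeff a) := by
    conv_lhs => rw [← MonoidAlgebra.sum_coeff_single β]
    rfl
  rw [h1, hsupp, Finset.sum_image hinj]
  refine Finset.sum_congr rfl fun j hj => ?_
  simp only [hT, Finset.mem_filter, Finset.mem_range] at hj
  rw [hpat, if_neg hj.2]

theorem minimal_annihilator_of_one_add_x_add_x_sq
    {G : Type*} [Group G] (x : G) (n : ℕ) (hn : 2 < n) (hx : orderOf x = n)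
    (α β : MonoidAlgebra (ZMod 2) G)
    (hα : α = 1 + MonoidAlgebra.single x 1 + MonoidAlgebra.single x⁻¹ 1 ∨
          α = 1 + MonoidAlgebra.single x 1 + MonoidAlgebra.single (x ^ 2) 1)
    (hβ : β ≠ 0) (hβ1 : (1 : G) ∈ β.coeff.support) (hαβ : α * β = 0)
    (hmin : ∀ γ : MonoidAlgebra (ZMod 2) G, γ ≠ 0 → α * γ = 0 →
      β.coeff.support.card ≤ γ.coeff.support.card) :
    ∃ s : ℕ → ℕ, s 0 = 0 ∧ s 1 = 1 ∧
      (∀ i, 2 ≤ i → i ≤ β.coeff.support.card - 1 → s i = s (i - 2) + 3) ∧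
      (β = ∑ i ∈ Finset.range β.coeff.support.card, MonoidAlgebra.single (x ^ s i) (1 : ZMod 2) ∨
       β = (∑ i ∈ Finset.range β.coeff.support.card,
              MonoidAlgebra.single (x ^ s i) (1 : ZMod 2)) * MonoidAlgebra.single x⁻¹ 1) := by
  classical
  set α0 : MonoidAlgebra (ZMod 2) G :=
    1 + MonoidAlgebra.single x 1 + MonoidAlgebra.single (x ^ 2) 1 with hα0
  have hxx : MonoidAlgebra.single x (1:ZMod 2) * MonoidAlgebra.single x 1
      = MonoidAlgebra.single (x^2) 1 := by
    rw [MonoidAlgebra.single_mul_single, one_mul, sq]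
  have hequiv : ∀ γ : MonoidAlgebra (ZMod 2) G, α * γ = 0 ↔ α0 * γ = 0 := by
    rcases hα with h | h
    · have h1 : MonoidAlgebra.single x (1:ZMod 2) * α = α0 := by
        rw [h, hα0]
        simp only [mul_add, mul_one, hxx, MonoidAlgebra.single_mul_single, one_mul,
          mul_inv_cancel, ← MonoidAlgebra.one_def]
        abel
      have h2 : MonoidAlgebra.single x⁻¹ (1:ZMod 2) * α0 = α := by
        rw [h, hα0]
        simp only [mul_add, mul_one, MonoidAlgebra.single_mul_single, one_mul,
          inv_mul_cancel, sq, inv_mul_cancel_left, ← MonoidAlgebra.one_def]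
        abel
      intro γ
      constructor
      · intro hg; rw [← h1, mul_assoc, hg, mul_zero]
      · intro hg; rw [← h2, mul_assoc, hg, mul_zero]
    · intro γ; rw [h]
  have L : ∀ (γ : MonoidAlgebra (ZMod 2) G) (y : G),
      (α0 * γ).coeff y = γ.coeff y + γ.coeff (x⁻¹ * y) + γ.coeff (x⁻¹ * (x⁻¹ * y)) := by
    intro γ y
    have hadd : ∀ (f g : MonoidAlgebra (ZMod 2) G) (z : G), (f + g).coeff z = f.coeff z + g.coeff z :=
      fun _ _ _ => rfl
    rw [hα0, add_mul, add_mul, one_mul, hadd, hadd, MonoidAlgebra.coeff_single_mul_apply,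
      MonoidAlgebra.coeff_single_mul_apply, one_mul, one_mul, sq, mul_inv_rev, mul_assoc]
  have hαβ0 : α0 * β = 0 := (hequiv β).mp hαβ
  have R : ∀ y : G, β.coeff y + β.coeff (x⁻¹ * y) + β.coeff (x⁻¹ * (x⁻¹ * y)) = 0 := by
    intro y
    rw [← L β y, hαβ0]
    rfl
  have hkey : ∀ z : G, z ∉ Subgroup.zpowers x → x⁻¹ * z ∉ Subgroup.zpowers x := by
    intro z hz h
    exact hz (by simpa [mul_inv_cancel_left] using Subgroup.mul_mem _ (Subgroup.mem_zpowers x) h)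
  set β₀ : MonoidAlgebra (ZMod 2) G := MonoidAlgebra.ofCoeff (Finsupp.filter (fun a => a ∈ Subgroup.zpowers x) β.coeff) with hβ₀def
  have hβ₀mul : α0 * β₀ = 0 := by
    ext y
    rw [L]
    by_cases hy : y ∈ Subgroup.zpowers x
    · have h1 : x⁻¹ * y ∈ Subgroup.zpowers x :=
        Subgroup.mul_mem _ (Subgroup.inv_mem _ (Subgroup.mem_zpowers x)) hy
      have h2 : x⁻¹ * (x⁻¹ * y) ∈ Subgroup.zpowers x :=
        Subgroup.mul_mem _ (Subgroup.inv_mem _ (Subgroup.mem_zpowers x)) h1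
      rw [hβ₀def]
      simp only [MonoidAlgebra.coeff_ofCoeff, MonoidAlgebra.coeff_zero, Finsupp.filter_apply, if_pos hy, if_pos h1, if_pos h2, Finsupp.coe_zero,
        Pi.zero_apply]
      exact R y
    · have h1 := hkey _ hy
      have h2 := hkey _ h1
      rw [hβ₀def]
      simp only [MonoidAlgebra.coeff_ofCoeff, MonoidAlgebra.coeff_zero, Finsupp.filter_apply, if_neg hy, if_neg h1, if_neg h2, Finsupp.coe_zero,
        Pi.zero_apply, add_zero]
  have hβ1' : β.coeff 1 ≠ 0 := Finsupp.mem_support_iff.mp hβ1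
  have hβ₀ne : β₀ ≠ 0 := by
    intro h0
    have hz : β₀.coeff 1 = β.coeff 1 := by
      rw [hβ₀def, MonoidAlgebra.coeff_ofCoeff, Finsupp.filter_apply, if_pos (Subgroup.one_mem _)]
    rw [h0] at hz
    simp only [MonoidAlgebra.coeff_zero, Finsupp.coe_zero, Pi.zero_apply] at hz
    exact hβ1' hz.symm
  have hcard := hmin β₀ hβ₀ne ((hequiv β₀).mpr hβ₀mul)
  have hsub : β₀.coeff.support ⊆ β.coeff.support := by
    rw [hβ₀def, MonoidAlgebra.coeff_ofCoeff, Finsupp.support_filter]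
    exact Finset.filter_subset _ _
  have hsupeq : β₀.coeff.support = β.coeff.support := Finset.eq_of_subset_of_card_le hsub hcard
  have hzp : ∀ a ∈ β.coeff.support, a ∈ Subgroup.zpowers x := by
    intro a ha
    rw [← hsupeq, hβ₀def, MonoidAlgebra.coeff_ofCoeff, Finsupp.support_filter] at ha
    exact (Finset.mem_filter.mp ha).2
  have hgrec : ∀ j : ℕ, β.coeff (x ^ (j+2)) = β.coeff (x ^ (j+1)) + β.coeff (x ^ j) := by
    intro j
    have e1 : x⁻¹ * x ^ (j+2) = x ^ (j+1) := by rw [pow_succ']; exact inv_mul_cancel_left _ _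
    have e2 : x⁻¹ * x ^ (j+1) = x ^ j := by rw [pow_succ']; exact inv_mul_cancel_left _ _
    have h := R (x ^ (j+2))
    rw [e1, e2] at h
    have c : ∀ u v w : ZMod 2, u + v + w = 0 → u = v + w := by decide
    exact c _ _ _ h
  have hg0 : β.coeff (x ^ 0) = 1 := by
    have c : ∀ u : ZMod 2, u ≠ 0 → u = 1 := by decide
    simpa using c _ hβ1'
  have hper : ∀ j, β.coeff (x ^ (j + n)) = β.coeff (x ^ j) := by
    intro j
    rw [pow_add, ← hx, pow_orderOf_eq_one, mul_one]
  have hpat : ∀ j : ℕ, β.coeff (x ^ j)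
      = if j % 3 = 0 then 1 else if j % 3 = 1 then β.coeff (x ^ 1) else 1 + β.coeff (x ^ 1) :=
    pattern3 (fun j => β.coeff (x ^ j)) 1 (β.coeff (x ^ 1)) hg0 rfl hgrec
  have h01 : (0 : ZMod 2) ≠ 1 := by decide
  have hinjT : ∀ r : ℕ, Set.InjOn (x ^ ·)
      (((Finset.range n).filter (fun j => j % 3 ≠ r) : Finset ℕ) : Set ℕ) := by
    intro r i hi j hj h
    simp only [Finset.coe_filter, Set.mem_setOf_eq, Finset.mem_range] at hi hj
    exact pow_inj' x n hx hi.1 hj.1 h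
  refine ⟨sfun, rfl, rfl, fun i h2 _ => by simp only [sfun]; omega, ?_⟩
  have hzcases : ∀ u : ZMod 2, u = 0 ∨ u = 1 := by decide
  rcases hzcases (β.coeff (x ^ 1)) with hc | hc
  · -- pattern B : 1, 0, 1, ...
    right
    have hpatB : ∀ j : ℕ, β.coeff (x ^ j) = if j % 3 = 1 then 0 else 1 := by
      intro j
      rw [hpat j, hc]
      have h3 : j % 3 = 0 ∨ j % 3 = 1 ∨ j % 3 = 2 := by omega
      rcases h3 with h | h | h <;> simp [h]
    have hn3 : n % 3 = 0 := by
      have e1 : β.coeff (x ^ (1 + n)) = 0 := by rw [hper 1, hc]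
      rw [hpatB] at e1
      by_cases h : (1 + n) % 3 = 1
      · omega
      · rw [if_neg h] at e1; exact absurd e1.symm h01
    obtain ⟨m, hm⟩ : ∃ m, n = 3 * m := ⟨n / 3, by omega⟩
    have hm1 : 1 ≤ m := by omega
    obtain ⟨hsupp, hsum⟩ := beta_eq_sum x n (by omega) hx β hzp 1 hpatB
    set e : ℕ → ℕ := fun i => if i = 0 then 3*m - 1 else sfun i - 1 with he
    have heinj : ∀ i ∈ Finset.range (2*m), ∀ j ∈ Finset.range (2*m), e i = e j → i = j := by
      intro i hi j hj h
      simp only [Finset.mem_range] at hi hj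
      simp only [he, sfun] at h
      split_ifs at h <;> omega
    have hTim : ((Finset.range n).filter (fun j => j % 3 ≠ 1)) = (Finset.range (2*m)).image e := by
      rw [hm, he, ← efun_image m hm1]
    have hcardB : β.coeff.support.card = 2*m := by
      rw [hsupp, Finset.card_image_of_injOn (hinjT 1), hTim,
        Finset.card_image_of_injOn (fun i hi j hj h => heinj i hi j hj h), Finset.card_range]
    have hterm : ∀ i ∈ Finset.range (2*m),
        MonoidAlgebra.single (x ^ sfun i) (1:ZMod 2) * MonoidAlgebra.single x⁻¹ 1
          = MonoidAlgebra.single (x ^ (e i)) 1 := by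
      intro i hi
      rw [MonoidAlgebra.single_mul_single, one_mul]
      congr 1
      by_cases h0 : i = 0
      · have hx1 : x ^ (3*m - 1) * x = 1 := by
          rw [← pow_succ, show 3*m-1+1 = n by omega, ← hx, pow_orderOf_eq_one]
        have hxi : x ^ (3*m-1) = x⁻¹ := eq_inv_of_mul_eq_one_left hx1
        simp [h0, he, sfun, hxi]
      · have hei : e i = sfun i - 1 := by rw [he]; exact if_neg h0
        have h1 : sfun i = (sfun i - 1) + 1 := by simp only [sfun]; omega
        rw [hei]
        conv_lhs => rw [h1]
        rw [pow_succ, mul_inv_cancel_right]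
    rw [hcardB, Finset.sum_mul, Finset.sum_congr rfl hterm, hsum, hTim]
    exact Finset.sum_image heinj
  · -- pattern A : 1, 1, 0, ...
    left
    have hpatA : ∀ j : ℕ, β.coeff (x ^ j) = if j % 3 = 2 then 0 else 1 := by
      intro j
      rw [hpat j, hc]
      have h3 : j % 3 = 0 ∨ j % 3 = 1 ∨ j % 3 = 2 := by omega
      rcases h3 with h | h | h <;> simp [h] <;> decide
    have hn3 : n % 3 = 0 := by
      have e0 : β.coeff (x ^ (0 + n)) = 1 := by rw [hper 0, hg0]
      have e1 : β.coeff (x ^ (1 + n)) = 1 := by rw [hper 1, hc]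
      rw [hpatA] at e0 e1
      by_cases h : n % 3 = 2
      · rw [if_pos (by omega : (0 + n) % 3 = 2)] at e0; exact absurd e0 h01
      · by_cases h' : n % 3 = 1
        · rw [if_pos (by omega : (1 + n) % 3 = 2)] at e1; exact absurd e1 h01
        · omega
    obtain ⟨m, hm⟩ : ∃ m, n = 3 * m := ⟨n / 3, by omega⟩
    obtain ⟨hsupp, hsum⟩ := beta_eq_sum x n (by omega) hx β hzp 2 hpatA
    have hsinj : ∀ i ∈ Finset.range (2*m), ∀ j ∈ Finset.range (2*m), sfun i = sfun j → i = j := by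
      intro i _ j _ h
      simp only [sfun] at h
      omega
    have hTim : ((Finset.range n).filter (fun j => j % 3 ≠ 2))
        = (Finset.range (2*m)).image sfun := by
      rw [hm, sfun_image]
    have hcardA : β.coeff.support.card = 2*m := by
      rw [hsupp, Finset.card_image_of_injOn (hinjT 2), hTim,
        Finset.card_image_of_injOn (fun i hi j hj h => hsinj i hi j hj h), Finset.card_range]
    rw [hcardA, hsum, hTim]
    exact Finset.sum_image hsinj
end

section
/- Let G be a group and x ∈ G an element of finite order n > 2. If the element α ∈ F₂[G] equal to 1 + x + x³ or to 1 + x² + x³ is a zero divisor in F₂[G], then n is a multiple of 7. -/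
open Polynomial

/-- char-2 helper -/
private lemma two_eq_zero_poly : (2 : Polynomial (ZMod 2)) = 0 := by
  have : ((2:ℕ) : Polynomial (ZMod 2)) = 0 := CharP.cast_eq_zero _ 2
  exact_mod_cast this

/-- If `p ∣ X^7 - 1`, `p` is coprime to `X - 1`, and `7 ∤ n` (with `n > 0`),
then `p` is coprime to `X^n - 1`. -/
private lemma coprime_pow_sub_one {n : ℕ} (hn0 : 1 < n) (h7 : ¬ 7 ∣ n)
    (p : Polynomial (ZMod 2)) (hp7 : p ∣ X^7 - 1) (hco : IsCoprime p (X - 1)) :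
    IsCoprime p (X^n - 1) := by
  have hcop : Nat.Coprime 7 n := (Nat.Prime.coprime_iff_not_dvd (by norm_num)).mpr h7
  obtain ⟨a, -, ha⟩ := Nat.exists_mul_mod_eq_one_of_coprime hcop hn0
  have hdm := Nat.div_add_mod (7*a) n
  set b := 7 * a / n with hb
  have hab : 7 * a = n * b + 1 := by omega
  have h1 : (X:Polynomial (ZMod 2))^7 - 1 ∣ X^(7*a) - 1 := by
    rw [pow_mul]
    simpa using sub_dvd_pow_sub_pow ((X:Polynomial (ZMod 2))^7) 1 a
  obtain ⟨w, hw⟩ := hp7.trans h1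
  obtain ⟨s, hs⟩ := sub_dvd_pow_sub_pow ((X:Polynomial (ZMod 2))^n) 1 b
  rw [one_pow] at hs
  have e : (X:Polynomial (ZMod 2))^(7*a) = X * (X^n)^b := by
    rw [hab, ← pow_mul, pow_succ, mul_comm]
  have hkey : (X:Polynomial (ZMod 2)) - 1 = p*w - X*((X^n-1)*s) := by
    linear_combination hw - (X:Polynomial (ZMod 2)) * hs - e
  obtain ⟨u, v, huv⟩ := hco
  exact ⟨u + v*w, -(v*X*s), by linear_combination huv - v*hkey⟩

/-- if p(x) kills a nonzero β and p is coprime to X^n-1 with x^n=1, contradiction -/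
private lemma beta_zero {G : Type*} [Group G] (x : G) (n : ℕ) (hxn : x ^ n = 1)
    (p : Polynomial (ZMod 2)) (hco : IsCoprime p (X^n - 1))
    (β : MonoidAlgebra (ZMod 2) G)
    (hαβ : (Polynomial.aeval (MonoidAlgebra.single x (1:ZMod 2)) p) * β = 0) : β = 0 := by
  set y : MonoidAlgebra (ZMod 2) G := MonoidAlgebra.single x (1:ZMod 2) with hy
  have hyn : y ^ n = 1 := by
    rw [hy, MonoidAlgebra.single_pow, one_pow, hxn]
    exact MonoidAlgebra.one_def.symm
  obtain ⟨u, v, huv⟩ := hco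
  have := congrArg (Polynomial.aeval y) huv
  simp only [map_add, map_mul, map_sub, map_pow, map_one, Polynomial.aeval_X] at this
  rw [hyn, sub_self, mul_zero, add_zero] at this
  calc β = ((Polynomial.aeval y u) * (Polynomial.aeval y p)) * β := by rw [this, one_mul]
    _ = (Polynomial.aeval y u) * ((Polynomial.aeval y p) * β) := by rw [mul_assoc]
    _ = 0 := by rw [hαβ, mul_zero]

theorem order_multiple_of_seven_of_zero_divisor_trinomial_deg_three
    {G : Type*} [Group G] (x : G) (n : ℕ) (hn : 2 < n) (hx : orderOf x = n)
    (α : MonoidAlgebra (ZMod 2) G)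
    (hα : α = 1 + MonoidAlgebra.single x 1 + MonoidAlgebra.single (x ^ 3) 1 ∨
          α = 1 + MonoidAlgebra.single (x ^ 2) 1 + MonoidAlgebra.single (x ^ 3) 1)
    (hzd : α ≠ 0 ∧ ∃ β : MonoidAlgebra (ZMod 2) G, β ≠ 0 ∧ α * β = 0) :
    7 ∣ n := by
  by_contra h7
  obtain ⟨hα0, β, hβ0, hαβ⟩ := hzd
  have hn1 : 1 < n := by omega
  have hxn : x ^ n = 1 := hx ▸ pow_orderOf_eq_one x
  set y : MonoidAlgebra (ZMod 2) G := MonoidAlgebra.single x (1:ZMod 2) with hy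
  have hy3 : y ^ 3 = MonoidAlgebra.single (x^3) 1 := by
    rw [hy, MonoidAlgebra.single_pow, one_pow]
  have hy2 : y ^ 2 = MonoidAlgebra.single (x^2) 1 := by
    rw [hy, MonoidAlgebra.single_pow, one_pow]
  have h2 := two_eq_zero_poly
  rcases hα with hα | hα
  · -- p = X^3 + X + 1
    set p : Polynomial (ZMod 2) := X^3 + X + 1 with hp
    have hp7 : p ∣ X^7 - 1 :=
      ⟨X^4 + X^2 + X + 1, by rw [hp]; linear_combination (-(X^5+X^4+X^3+X^2+X)-1 : Polynomial (ZMod 2)) * h2⟩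
    have hco : IsCoprime p (X - 1) :=
      ⟨1, X^2 + X, by rw [hp]; linear_combination ((X:Polynomial (ZMod 2))^3) * h2⟩
    have hcon := coprime_pow_sub_one hn1 h7 p hp7 hco
    have hev : Polynomial.aeval y p = α := by
      rw [hp, hα]
      simp only [map_add, map_pow, map_one, Polynomial.aeval_X, hy3]
      abel
    exact hβ0 (beta_zero x n hxn p hcon β (by rw [hev]; exact hαβ))
  · -- p = X^3 + X^2 + 1
    set p : Polynomial (ZMod 2) := X^3 + X^2 + 1 with hp
    have hp7 : p ∣ X^7 - 1 :=
      ⟨X^4 + X^3 + X^2 + 1, by rw [hp]; linear_combination (-(X^6+X^5+X^4+X^3+X^2)-1 : Polynomial (ZMod 2)) * h2⟩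
    have hco : IsCoprime p (X - 1) :=
      ⟨1, X^2, by rw [hp]; linear_combination ((X:Polynomial (ZMod 2))^3) * h2⟩
    have hcon := coprime_pow_sub_one hn1 h7 p hp7 hco
    have hev : Polynomial.aeval y p = α := by
      rw [hp, hα]
      simp only [map_add, map_pow, map_one, Polynomial.aeval_X, hy3, hy2]
      abel
    exact hβ0 (beta_zero x n hxn p hcon β (by rw [hev]; exact hαβ))
end

section
/- Let G be a group and x ∈ G an element of finite order n > 2. If the element α ∈ F₂[G] equal to one of 1 + x² + x^{n−1}, 1 + x^{n−3} + x^{n−2}, 1 + x + x^{n−2}, or 1 + x^{n−3} + x^{n−1} is a zero divisor in F₂[G], then n is a multiple of 7. -/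
section Aux

variable {R : Type*} [Ring R]

lemma my_rearr (h2 : ∀ γ : R, γ + γ = 0) {a b c : R} (h : a + b + c = 0) :
    c = a + b := by
  have hneg : ∀ γ : R, -γ = γ := fun γ => neg_eq_of_add_eq_zero_left (h2 γ)
  have h' : c = -(a + b) := eq_neg_of_add_eq_zero_right h
  rw [hneg] at h'
  exact h'

lemma seven_step (h2 : ∀ γ : R, γ + γ = 0) (u β : R)
    (hT : (1 + u + u ^ 3) * β = 0 ∨ (1 + u ^ 2 + u ^ 3) * β = 0) :
    u ^ 7 * β = β := by
  rcases hT with hT | hT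
  · have hrec : ∀ k : ℕ, u ^ (k + 3) * β = u ^ k * β + u ^ (k + 1) * β := by
      intro k
      have hexp : u ^ k * ((1 + u + u ^ 3) * β) =
          u ^ k * β + u ^ (k + 1) * β + u ^ (k + 3) * β := by
        rw [add_mul, add_mul, one_mul, mul_add, mul_add, ← mul_assoc, ← mul_assoc,
          ← pow_succ, ← pow_add]
      have h1 : u ^ k * β + u ^ (k + 1) * β + u ^ (k + 3) * β = 0 := by
        rw [← hexp, hT, mul_zero]
      exact my_rearr h2 h1
    have e3 := hrec 0
    have e4 := hrec 1
    have e5 := hrec 2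
    have e7 := hrec 4
    norm_num at e3 e4 e5 e7
    rw [e4, e5, e3] at e7
    rw [e7]
    have : u * β + u ^ 2 * β + (u ^ 2 * β + (β + u * β)) =
        β + ((u * β + u * β) + (u ^ 2 * β + u ^ 2 * β)) := by abel
    rw [this, h2, h2, add_zero, add_zero]
  · have hrec : ∀ k : ℕ, u ^ (k + 3) * β = u ^ k * β + u ^ (k + 2) * β := by
      intro k
      have hexp : u ^ k * ((1 + u ^ 2 + u ^ 3) * β) =
          u ^ k * β + u ^ (k + 2) * β + u ^ (k + 3) * β := by
        rw [add_mul, add_mul, one_mul, mul_add, mul_add, ← mul_assoc, ← mul_assoc,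
          ← pow_add, ← pow_add]
      have h1 : u ^ k * β + u ^ (k + 2) * β + u ^ (k + 3) * β = 0 := by
        rw [← hexp, hT, mul_zero]
      exact my_rearr h2 h1
    have e3 := hrec 0
    have e4 := hrec 1
    have e5 := hrec 2
    have e6 := hrec 3
    have e7 := hrec 4
    norm_num at e3 e4 e5 e6 e7
    rw [e6, e5, e4, e3] at e7
    rw [e7]
    -- γ7 = (γ1+(γ0+γ2)) + ((γ0+γ2) + (γ2 + (γ1+(γ0+γ2))))
    have : u * β + (β + u ^ 2 * β) + (β + u ^ 2 * β + (u ^ 2 * β + (u * β + (β + u ^ 2 * β)))) =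
        β + ((β + β) + ((u * β + u * β) + ((u ^ 2 * β + u ^ 2 * β) + (u ^ 2 * β + u ^ 2 * β)))) := by
      abel
    rw [this]; simp [h2]

end Aux


theorem order_multiple_of_seven_of_zero_divisor_trinomial_variants
    {G : Type*} [Group G] (x : G) (n : ℕ) (hn : 2 < n) (hx : orderOf x = n)
    (α : MonoidAlgebra (ZMod 2) G)
    (hα : α = 1 + MonoidAlgebra.single (x ^ 2) 1 + MonoidAlgebra.single (x ^ (n - 1)) 1 ∨
          α = 1 + MonoidAlgebra.single (x ^ (n - 3)) 1 + MonoidAlgebra.single (x ^ (n - 2)) 1 ∨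
          α = 1 + MonoidAlgebra.single x 1 + MonoidAlgebra.single (x ^ (n - 2)) 1 ∨
          α = 1 + MonoidAlgebra.single (x ^ (n - 3)) 1 + MonoidAlgebra.single (x ^ (n - 1)) 1)
    (hzd : α ≠ 0 ∧ ∃ β : MonoidAlgebra (ZMod 2) G, β ≠ 0 ∧ α * β = 0) :
    7 ∣ n := by
  by_contra h7
  obtain ⟨hα0, β, hβ0, hαβ⟩ := hzd
  set u : MonoidAlgebra (ZMod 2) G := MonoidAlgebra.single x 1 with hu
  -- basic facts
  have h2 : ∀ γ : MonoidAlgebra (ZMod 2) G, γ + γ = 0 := by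
    intro γ
    calc γ + γ = (1 : ZMod 2) • γ + (1 : ZMod 2) • γ := by rw [one_smul]
      _ = ((1 : ZMod 2) + 1) • γ := by rw [add_smul]
      _ = (0 : ZMod 2) • γ := by rw [show (1 : ZMod 2) + 1 = 0 from rfl]
      _ = 0 := zero_smul _ _
  have hupow : ∀ k : ℕ, u ^ k = MonoidAlgebra.single (x ^ k) (1 : ZMod 2) := by
    intro k
    rw [hu, MonoidAlgebra.single_pow, one_pow]
  have hun : u ^ n = 1 := by
    rw [hupow, ← hx, pow_orderOf_eq_one, ← MonoidAlgebra.one_def]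
  -- get the trinomial relation
  have hT : (1 + u + u ^ 3) * β = 0 ∨ (1 + u ^ 2 + u ^ 3) * β = 0 := by
    rcases hα with h | h | h | h
    · left
      have : u * α = 1 + u + u ^ 3 := by
        rw [h, ← hupow 2, ← hupow (n-1), mul_add, mul_add, mul_one,
          ← pow_succ', ← pow_succ']
        have h1 : n - 1 + 1 = n := by omega
        rw [h1, hun]
        norm_num
        abel
      rw [← this, mul_assoc, hαβ, mul_zero]
    · left
      have : u ^ 3 * α = 1 + u + u ^ 3 := by
        rw [h, ← hupow (n-3), ← hupow (n-2), mul_add, mul_add, mul_one,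
          ← pow_add, ← pow_add]
        have h1 : 3 + (n - 3) = n := by omega
        have h2' : 3 + (n - 2) = n + 1 := by omega
        rw [h1, h2', hun, pow_add, hun, one_mul, pow_one]
        abel
      rw [← this, mul_assoc, hαβ, mul_zero]
    · right
      have : u ^ 2 * α = 1 + u ^ 2 + u ^ 3 := by
        rw [h, mul_add, mul_add, mul_one, ← hupow (n-2), ← pow_succ, ← pow_add]
        have h1 : 2 + (n - 2) = n := by omega
        rw [h1, hun]
        norm_num
        abel
      rw [← this, mul_assoc, hαβ, mul_zero]
    · right
      have : u ^ 3 * α = 1 + u ^ 2 + u ^ 3 := by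
        rw [h, ← hupow (n-3), ← hupow (n-1), mul_add, mul_add, mul_one,
          ← pow_add, ← pow_add]
        have h1 : 3 + (n - 3) = n := by omega
        have h2' : 3 + (n - 1) = n + 2 := by omega
        rw [h1, h2', hun, pow_add, hun, one_mul]
        abel
      rw [← this, mul_assoc, hαβ, mul_zero]
  -- u^7 * β = β
  have h7β : u ^ 7 * β = β := seven_step h2 u β hT
  -- coprimality gives m with 7*m % n = 1
  have hcop : Nat.Coprime 7 n := (Nat.Prime.coprime_iff_not_dvd (by norm_num)).mpr h7
  obtain ⟨m, -, hm⟩ := Nat.exists_mul_mod_eq_one_of_coprime hcop (by omega)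
  -- x ^ (7*m) = x
  have hxm : x ^ (7 * m) = x := by
    conv_lhs => rw [← Nat.div_add_mod (7 * m) n, hm, pow_add, pow_mul, ← hx,
      pow_orderOf_eq_one, one_pow, one_mul, pow_one]
  -- u * β = β
  have hmul : ∀ k : ℕ, (u ^ 7) ^ k * β = β := by
    intro k
    induction k with
    | zero => rw [pow_zero, one_mul]
    | succ k ih => rw [pow_succ, mul_assoc, h7β, ih]
  have huβ : u * β = β := by
    have := hmul m
    rw [← pow_mul, hupow, hxm, ← hu] at this
    exact this
  -- powers of u fix β
  have hukβ : ∀ k : ℕ, u ^ k * β = β := by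
    intro k
    induction k with
    | zero => rw [pow_zero, one_mul]
    | succ k ih => rw [pow_succ, mul_assoc, huβ, ih]
  -- conclude β = 0
  apply hβ0
  rcases hT with hT | hT
  · have : (1 + u + u ^ 3) * β = β := by
      rw [add_mul, add_mul, one_mul, hukβ, show u * β = u ^ 1 * β by rw [pow_one], hukβ]
      rw [show β + β + β = β + (β + β) from by abel, h2, add_zero]
    rw [this] at hT
    exact hT
  · have : (1 + u ^ 2 + u ^ 3) * β = β := by
      rw [add_mul, add_mul, one_mul, hukβ, hukβ]
      rw [show β + β + β = β + (β + β) from by abel, h2, add_zero]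
    rw [this] at hT
    exact hT
end

section
/- Let G be a group and x ∈ G. The element 1 + x + x² of the group algebra F₂[G] is a zero divisor if and only if x has finite order divisible by 3. -/
open MonoidAlgebra Finset

private lemma MA_add_apply {k G : Type*} [Semiring k] (f g : MonoidAlgebra k G) (a : G) :
    (f + g).coeff a = f.coeff a + g.coeff a := rfl

private lemma fcongr {α M : Type*} [Semiring M] {f g : MonoidAlgebra M α} (h : f = g) (a : α) :
    f.coeff a = g.coeff a := by rw [h]

theorem one_add_x_add_x_sq_zero_divisor_iff
    {G : Type*} [Group G] (x : G) :
    (((1 + MonoidAlgebra.single x 1 + MonoidAlgebra.single (x ^ 2) 1 :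
        MonoidAlgebra (ZMod 2) G) ≠ 0) ∧
      ∃ β : MonoidAlgebra (ZMod 2) G, β ≠ 0 ∧
        (1 + MonoidAlgebra.single x 1 + MonoidAlgebra.single (x ^ 2) 1) * β = 0) ↔
    (IsOfFinOrder x ∧ 3 ∣ orderOf x) := by
  set X : MonoidAlgebra (ZMod 2) G := MonoidAlgebra.single x 1 with hXdef
  classical
  have h2 : (2 : MonoidAlgebra (ZMod 2) G) = 0 := by
    have h21 : (2 : MonoidAlgebra (ZMod 2) G) = 1 + 1 := one_add_one_eq_two.symm
    rw [h21, MonoidAlgebra.one_def, ← MonoidAlgebra.single_add]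
    have hz2 : (1 + 1 : ZMod 2) = 0 := by decide
    rw [hz2, MonoidAlgebra.single_zero]
  have hXpow : ∀ k : ℕ, X ^ k = MonoidAlgebra.single (x ^ k) (1 : ZMod 2) := fun k => by
    rw [hXdef, MonoidAlgebra.single_pow, one_pow]
  have hX2 : MonoidAlgebra.single (x ^ 2) (1 : ZMod 2) = X ^ 2 := (hXpow 2).symm
  have hexp : (1 + X) * (1 + X + X ^ 2) = 1 + X ^ 3 := by
    have h : (1 + X) * (1 + X + X ^ 2) = 1 + 2 * X + 2 * X ^ 2 + X ^ 3 := by noncomm_ring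
    rw [h, h2]; noncomm_ring
  have hexp' : (1 + X + X ^ 2) * (1 + X) = 1 + X ^ 3 := by
    have h : (1 + X + X ^ 2) * (1 + X) = 1 + 2 * X + 2 * X ^ 2 + X ^ 3 := by noncomm_ring
    rw [h, h2]; noncomm_ring
  have hneg : (-1 : MonoidAlgebra (ZMod 2) G) = 1 := by
    rw [neg_eq_iff_add_eq_zero, one_add_one_eq_two, h2]
  constructor
  · rintro ⟨-, β, hβ, hmul⟩
    rw [hX2] at hmul
    have hb2 : β + β = 0 := by
      have : (2 : MonoidAlgebra (ZMod 2) G) * β = 0 := by rw [h2, zero_mul]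
      rwa [two_mul] at this
    have key : X ^ 3 * β = β := by
      have h0 : β + X ^ 3 * β = 0 := by
        have : (1 + X ^ 3) * β = 0 := by rw [← hexp, mul_assoc, hmul, mul_zero]
        rwa [add_mul, one_mul] at this
      have h1 : X ^ 3 * β = -β := eq_neg_of_add_eq_zero_right h0
      rw [h1, neg_eq_iff_add_eq_zero]
      exact hb2
    have hn : ∀ k : ℕ, MonoidAlgebra.single (x ^ (3 * k)) (1 : ZMod 2) * β = β := by
      intro k
      induction k with
      | zero => simp [← MonoidAlgebra.one_def]
      | succ k ih =>
        have hsplit : MonoidAlgebra.single (x ^ (3 * (k + 1))) (1 : ZMod 2)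
            = MonoidAlgebra.single (x ^ 3) (1 : ZMod 2)
              * MonoidAlgebra.single (x ^ (3 * k)) (1 : ZMod 2) := by
          rw [MonoidAlgebra.single_mul_single, one_mul, ← pow_add]
          ring_nf
        rw [hsplit, mul_assoc, ih, ← hXpow]
        exact key
    obtain ⟨g, hg⟩ := Finsupp.support_nonempty_iff.mpr (MonoidAlgebra.coeff_eq_zero.not.mpr hβ)
    have hmem : ∀ k : ℕ, (x ^ (3 * k))⁻¹ * g ∈ β.coeff.support := by
      intro k
      have h' := fcongr (hn k) g
      rw [MonoidAlgebra.coeff_single_mul_apply, one_mul] at h'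
      rw [Finsupp.mem_support_iff, h']
      exact Finsupp.mem_support_iff.mp hg
    have hfin : IsOfFinOrder x := by
      by_contra hinf
      have hinj : Function.Injective fun k : ℕ => (x ^ (3 * k))⁻¹ * g := by
        intro a b hab
        simp only [mul_left_inj, inv_inj] at hab
        have := injective_pow_iff_not_isOfFinOrder.mpr hinf hab
        omega
      exact (Set.infinite_of_injective_forall_mem hinj hmem) β.coeff.support.finite_toSet
    refine ⟨hfin, ?_⟩
    by_contra hnd
    have hnpos : 0 < orderOf x := hfin.orderOf_pos
    have hXβ : X * β = β := by
      rcases eq_or_lt_of_le (Nat.succ_le_of_lt hnpos) with h1 | h1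
      · have hx1 : x = 1 := orderOf_eq_one_iff.mp h1.symm
        rw [hXdef, hx1, ← MonoidAlgebra.one_def, one_mul]
      · have hcop : Nat.Coprime 3 (orderOf x) :=
          (Nat.Prime.coprime_iff_not_dvd (by norm_num)).mpr hnd
        obtain ⟨k, -, hk⟩ := Nat.exists_mul_mod_eq_one_of_coprime hcop h1
        have hxk : x ^ (3 * k) = x := by
          rw [← pow_mod_orderOf, hk, pow_one]
        have := hn k
        rwa [hxk, ← hXdef] at this
    have hX2β : X ^ 2 * β = β := by
      rw [sq, mul_assoc, hXβ, hXβ]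
    rw [add_mul, add_mul, one_mul, hXβ, hX2β] at hmul
    exact hβ (by rwa [hb2, zero_add] at hmul)
  · rintro ⟨hfin, hdvd⟩
    obtain ⟨m, hm⟩ := hdvd
    have hnpos : 0 < orderOf x := hfin.orderOf_pos
    have hmpos : 0 < m := by omega
    have hx1 : x ≠ 1 := by
      intro h
      rw [orderOf_eq_one_iff.mpr h] at hm
      omega
    have hx2 : x ^ 2 ≠ 1 := by
      intro h
      have hd := orderOf_dvd_iff_pow_eq_one.mpr h
      have := Nat.le_of_dvd (by norm_num) hd
      omega
    constructor
    · intro h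
      have h' := fcongr h (1 : G)
      rw [hXdef, MonoidAlgebra.one_def] at h'
      have hz : (0 : MonoidAlgebra (ZMod 2) G).coeff (1 : G) = 0 := rfl
      rw [hz, MA_add_apply, MA_add_apply, MonoidAlgebra.coeff_single, MonoidAlgebra.coeff_single,
        MonoidAlgebra.coeff_single, Finsupp.single_eq_same,
        Finsupp.single_eq_of_ne' hx1, Finsupp.single_eq_of_ne' hx2] at h'
      simp at h'
    · set S : MonoidAlgebra (ZMod 2) G := ∑ i ∈ Finset.range m, (X ^ 3) ^ i with hS
      refine ⟨(1 + X) * S, ?_, ?_⟩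
      · intro h
        have hterm : ∀ i : ℕ, (1 + X) * (X ^ 3) ^ i
            = MonoidAlgebra.single (x ^ (3 * i)) (1 : ZMod 2)
              + MonoidAlgebra.single (x ^ (3 * i + 1)) (1 : ZMod 2) := by
          intro i
          rw [add_mul, one_mul, ← pow_mul, hXpow (3 * i), hXdef,
            MonoidAlgebra.single_mul_single, one_mul]
          congr 2
          rw [← pow_succ']
        have h1S : (1 + X) * S = ∑ i ∈ Finset.range m,
            (MonoidAlgebra.single (x ^ (3 * i)) (1 : ZMod 2)
              + MonoidAlgebra.single (x ^ (3 * i + 1)) (1 : ZMod 2)) := by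
          rw [hS, Finset.mul_sum]
          exact Finset.sum_congr rfl fun i _ => hterm i
        rw [h1S] at h
        have h' := fcongr h (1 : G)
        have hz : (0 : MonoidAlgebra (ZMod 2) G).coeff (1 : G) = 0 := rfl
        have hsum : (∑ i ∈ Finset.range m,
            (MonoidAlgebra.single (x ^ (3 * i)) (1 : ZMod 2)
              + MonoidAlgebra.single (x ^ (3 * i + 1)) (1 : ZMod 2))).coeff (1 : G)
            = ∑ i ∈ Finset.range m,
            (MonoidAlgebra.single (x ^ (3 * i)) (1 : ZMod 2)
              + MonoidAlgebra.single (x ^ (3 * i + 1)) (1 : ZMod 2)).coeff (1 : G) := by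
          rw [MonoidAlgebra.coeff_sum, Finsupp.finset_sum_apply]
        rw [hz, hsum] at h'
        have heval : ∀ i ∈ Finset.range m,
            (MonoidAlgebra.single (x ^ (3 * i)) (1 : ZMod 2)
              + MonoidAlgebra.single (x ^ (3 * i + 1)) (1 : ZMod 2)).coeff (1 : G)
            = if i = 0 then 1 else 0 := by
          intro i hi
          rw [Finset.mem_range] at hi
          have h31 : x ^ (3 * i + 1) ≠ 1 := by
            intro hcon
            have hdd := orderOf_dvd_iff_pow_eq_one.mpr hcon
            rw [hm] at hdd
            have h3d : (3 : ℕ) ∣ 3 * i + 1 := dvd_trans ⟨m, rfl⟩ hdd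
            omega
          rw [MA_add_apply, MonoidAlgebra.coeff_single (x ^ (3 * i + 1)), Finsupp.single_eq_of_ne' h31, add_zero]
          by_cases h0 : i = 0
          · subst h0
            rw [if_pos rfl]
            simpa using (Finsupp.single_eq_same : (Finsupp.single (1:G) (1:ZMod 2)) 1 = 1)
          · have h30 : x ^ (3 * i) ≠ 1 := by
              intro hcon
              have hd := orderOf_dvd_iff_pow_eq_one.mpr hcon
              rw [hm] at hd
              have hmd : m ∣ i := (mul_dvd_mul_iff_left (by norm_num : (3:ℕ) ≠ 0)).mp hd
              have := Nat.le_of_dvd (Nat.pos_of_ne_zero h0) hmd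
              omega
            rw [if_neg h0, MonoidAlgebra.coeff_single, Finsupp.single_eq_of_ne' h30]
        rw [Finset.sum_congr rfl heval,
          Finset.sum_ite_eq' (Finset.range m) 0 (fun _ => (1 : ZMod 2)),
          if_pos (Finset.mem_range.mpr hmpos)] at h'
        exact one_ne_zero h'
      · rw [hX2, ← mul_assoc, hexp']
        have hsub : (1 : MonoidAlgebra (ZMod 2) G) + X ^ 3 = X ^ 3 - 1 := by
          rw [sub_eq_add_neg, hneg, add_comm]
        rw [hsub, hS, mul_geom_sum, ← pow_mul, hXpow, ← hm, pow_orderOf_eq_one,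
          ← MonoidAlgebra.one_def, sub_self]
end

section
/- Let n > 1 be an integer and A = {t₀, t₁, …, t_k} ⊆ ℤ/nℤ with representatives t₀ = 0 and 1 ≤ t₁ < t₂ < ⋯ < t_k ≤ n−1, and suppose every element of the multiset union of A, A+1, A+2 has multiplicity 2. Then for every i ∈ {1, 2, …, k}, either t_i = t_{i−1} + 1 or t_i = t_{i−1} + 2 (as integers). -/
open scoped Classical

/-- Every element appearing in the multiset union of `A`, `A+1`, `A+2` (subsets of `ℤ/nℤ`)
has multiplicity exactly `2`. -/
def MultiplicityTwo {n : ℕ} (A : Set (ZMod n)) : Prop :=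
  ∀ z : ZMod n, (z ∈ A ∨ z - 1 ∈ A ∨ z - 2 ∈ A) →
    ((if z ∈ A then 1 else 0) + (if z - 1 ∈ A then 1 else 0) +
      (if z - 2 ∈ A then 1 else 0) : ℕ) = 2

theorem consecutive_gap_one_or_two
    (n k : ℕ) (hn : 1 < n) (t : ℕ → ℕ)
    (ht0 : t 0 = 0) (hmono : ∀ i j, i < j → j ≤ k → t i < t j)
    (htk : t k ≤ n - 1)
    (A : Set (ZMod n)) (hA : A = {z : ZMod n | ∃ i ≤ k, z = (t i : ZMod n)})
    (hmul : MultiplicityTwo A) :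
    ∀ i, 1 ≤ i → i ≤ k → t i = t (i - 1) + 1 ∨ t i = t (i - 1) + 2 := by
  intro i hi1 hik
  haveI : NeZero n := ⟨by omega⟩
  have htle : ∀ j, j ≤ k → t j ≤ n - 1 := by
    intro j hj
    rcases eq_or_lt_of_le hj with rfl | h
    · exact htk
    · exact le_trans (le_of_lt (hmono j k h le_rfl)) htk
  have hinj : ∀ m m' : ℕ, m < n → m' < n → ((m : ZMod n) = (m' : ZMod n)) → m = m' := by
    intro m m' hm hm' h
    have := congrArg ZMod.val h
    rwa [ZMod.val_cast_of_lt hm, ZMod.val_cast_of_lt hm'] at this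
  set a := t (i - 1) with ha
  have hab : a < t i := hmono (i - 1) i (by omega) hik
  by_contra hcon
  push_neg at hcon
  have hb3 : a + 3 ≤ t i := by omega
  have hbn : t i ≤ n - 1 := htle i hik
  have han : a + 2 < n := by omega
  -- comparison helper
  have hcomp : ∀ j, j ≤ k → t j ≤ a ∨ t i ≤ t j := by
    intro j hj
    rcases lt_or_ge j i with h | h
    · left
      rcases lt_or_eq_of_le (Nat.le_sub_one_of_lt h) with h' | h'
      · exact le_of_lt (hmono j (i - 1) h' (by omega))
      · rw [h']
    · right
      rcases eq_or_lt_of_le h with rfl | h'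
      · exact le_rfl
      · exact le_of_lt (hmono i j h' hj)
  have hnotin : ∀ m : ℕ, m < n → a < m → m < t i → ((m : ZMod n) ∉ A) := by
    intro m hm hm1 hm2
    rw [hA]
    rintro ⟨j, hj, hmj⟩
    have htjn : t j < n := by have := htle j hj; omega
    have : m = t j := hinj m (t j) hm htjn hmj
    rcases hcomp j hj with h | h <;> omega
  set z : ZMod n := ((a + 2 : ℕ) : ZMod n) with hz
  have hz1 : z - 1 = ((a + 1 : ℕ) : ZMod n) := by rw [hz]; push_cast; ring
  have hz2 : z - 2 = ((a : ℕ) : ZMod n) := by rw [hz]; push_cast; ring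
  have haA : ((a : ℕ) : ZMod n) ∈ A := by
    rw [hA]; exact ⟨i - 1, by omega, rfl⟩
  have h0 : z ∉ A := hnotin (a + 2) han (by omega) (by omega)
  have h1 : ((a + 1 : ℕ) : ZMod n) ∉ A := hnotin (a + 1) (by omega) (by omega) (by omega)
  have hm := hmul z (Or.inr (Or.inr (hz2 ▸ haA)))
  rw [hz1, hz2] at hm
  rw [if_neg h0, if_neg h1, if_pos haA] at hm
  omega
end

section
/- Let n > 1 be an integer and A = {t₀, t₁, …, t_k} ⊆ ℤ/nℤ with representatives t₀ = 0 and 1 ≤ t₁ < t₂ < ⋯ < t_k ≤ n−1, and suppose every element of the multiset union of A, A+1, A+2 has multiplicity 2. Then for every i ∈ {1, 2, …, k}, either t_i = t_{i−1} + 1 and t_{i−1} + 2 ∉ A, or t_i = t_{i−1} + 2 and t_{i−1} + 1 ∉ A (sums taken as integers, membership in ℤ/nℤ). -/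
open scoped Classical

theorem consecutive_gap_dichotomy
    (n k : ℕ) (hn : 1 < n) (t : ℕ → ℕ)
    (ht0 : t 0 = 0) (hmono : ∀ i j, i < j → j ≤ k → t i < t j)
    (htk : t k ≤ n - 1)
    (A : Set (ZMod n)) (hA : A = {z : ZMod n | ∃ i ≤ k, z = (t i : ZMod n)})
    (hmul : MultiplicityTwo A) :
    ∀ i, 1 ≤ i → i ≤ k →
      (t i = t (i - 1) + 1 ∧ ((t (i - 1) + 2 : ℕ) : ZMod n) ∉ A) ∨
      (t i = t (i - 1) + 2 ∧ ((t (i - 1) + 1 : ℕ) : ZMod n) ∉ A) := by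
  haveI : NeZero n := ⟨by omega⟩
  intro i hi1 hik
  obtain ⟨a, ha⟩ : ∃ a, a = t (i - 1) := ⟨_, rfl⟩
  rw [← ha]
  have hbound : ∀ j, j ≤ k → t j ≤ n - 1 := by
    intro j hj
    rcases eq_or_lt_of_le hj with h | h
    · rw [h]; exact htk
    · exact le_of_lt (lt_of_lt_of_le (hmono j k h le_rfl) htk)
  have hinj : ∀ x y : ℕ, x ≤ n - 1 → y ≤ n - 1 → (x : ZMod n) = (y : ZMod n) → x = y := by
    intro x y hx hy h
    have := congrArg ZMod.val h
    rwa [ZMod.val_cast_of_lt (by omega), ZMod.val_cast_of_lt (by omega)] at this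
  have hik1 : i - 1 ≤ k := by omega
  have haA : (a : ZMod n) ∈ A := by
    rw [hA, ha]; exact ⟨i - 1, hik1, rfl⟩
  have hak : a ≤ n - 1 := ha ▸ hbound _ hik1
  have hti : a < t i := ha ▸ hmono (i - 1) i (by omega) hik
  have htik : t i ≤ n - 1 := hbound i hik
  have key : ∀ m : ℕ, 0 < m → ((a + m : ℕ) : ZMod n) ∈ A → a + m ≤ n - 1 →
      a + m ≤ t i → t i = a + m := by
    intro m hm hmem hle hlei
    rw [hA] at hmem
    obtain ⟨j, hj, hje⟩ := hmem
    have hje' : a + m = t j := hinj _ _ hle (hbound j hj) hje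
    have hji : j = i := by
      rcases lt_trichotomy j i with h | h | h
      · rcases Nat.lt_or_ge j (i - 1) with h' | h'
        · have := hmono j (i - 1) h' hik1; omega
        · have h'' : j = i - 1 := by omega
          rw [h''] at hje'; omega
      · exact h
      · have := hmono i j h hj; omega
    rw [hji] at hje'
    omega
  have e3 : ((a : ZMod n) + 2) - 1 = (a : ZMod n) + 1 := by ring
  have e4 : ((a : ZMod n) + 2) - 2 = (a : ZMod n) := by ring
  have h2 := hmul ((a : ZMod n) + 2) (Or.inr (Or.inr (by rw [e4]; exact haA)))
  rw [e3, e4, if_pos haA] at h2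
  have c1 : ((a + 1 : ℕ) : ZMod n) = (a : ZMod n) + 1 := by push_cast; ring
  have c2 : ((a + 2 : ℕ) : ZMod n) = (a : ZMod n) + 2 := by push_cast; ring
  by_cases hp : ((a : ZMod n) + 1) ∈ A
  · left
    have hnp2 : ((a : ZMod n) + 2) ∉ A := by
      intro h; rw [if_pos h, if_pos hp] at h2; omega
    constructor
    · exact key 1 one_pos (by rwa [c1]) (by omega) (by omega)
    · rwa [c2]
  · right
    have hp2 : ((a : ZMod n) + 2) ∈ A := by
      by_contra h; rw [if_neg h, if_neg hp] at h2; omega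
    have hlt : a + 2 ≤ n - 1 := by
      by_contra h
      have hti1 : t i = a + 1 := by omega
      exact hp (by rw [← c1, ← hti1, hA]; exact ⟨i, hik, rfl⟩)
    have hti2 : a + 2 ≤ t i := by
      rcases Nat.lt_or_ge (t i) (a + 2) with h | h
      · exfalso
        have hti1 : t i = a + 1 := by omega
        exact hp (by rw [← c1, ← hti1, hA]; exact ⟨i, hik, rfl⟩)
      · exact h
    constructor
    · exact key 2 two_pos (by rwa [c2]) hlt hti2
    · rwa [c1]
end

section
/- Let n > 1 be an integer and A = {t₀, t₁, …, t_k} ⊆ ℤ/nℤ with representatives t₀ = 0 and 1 ≤ t₁ < t₂ < ⋯ < t_k ≤ n−1, and suppose every element of the multiset union of A, A+1, A+2 has multiplicity 2. If t_i − 1 ∉ A for some i ∈ {1, 2, …, k}, then t_i + 1 (mod n) ∈ A; furthermore, if i < k, then t_{i+1} = t_i + 1. -/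
open scoped Classical

theorem succ_mem_of_pred_not_mem
    (n k : ℕ) (hn : 1 < n) (t : ℕ → ℕ)
    (ht0 : t 0 = 0) (hmono : ∀ i j, i < j → j ≤ k → t i < t j)
    (htk : t k ≤ n - 1)
    (A : Set (ZMod n)) (hA : A = {z : ZMod n | ∃ i ≤ k, z = (t i : ZMod n)})
    (hmul : MultiplicityTwo A) :
    ∀ i, 1 ≤ i → i ≤ k → ((t i : ZMod n) - 1 ∉ A →
      ((t i : ZMod n) + 1 ∈ A ∧ (i < k → t (i + 1) = t i + 1))) := by
  haveI : NeZero n := ⟨by omega⟩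
  intro i hi1 hik hnot
  have hmem : (t i : ZMod n) ∈ A := by
    rw [hA]; exact ⟨i, hik, rfl⟩
  have hsucc : (t i : ZMod n) + 1 ∈ A := by
    have h := hmul ((t i : ZMod n) + 1)
      (Or.inr (Or.inl (by simpa using hmem)))
    have h1 : ((t i : ZMod n) + 1) - 1 = (t i : ZMod n) := by ring
    have h2 : ((t i : ZMod n) + 1) - 2 = (t i : ZMod n) - 1 := by ring
    rw [h1, h2] at h
    by_contra hne
    simp [hmem, hnot, hne] at h
  refine ⟨hsucc, ?_⟩
  intro hltk
  rw [hA] at hsucc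
  obtain ⟨j, hjk, hj⟩ := hsucc
  have hti : t i < t k := hmono i k hltk le_rfl
  have hlt_n : t i + 1 < n := by omega
  have htj : t j < n := by
    rcases lt_or_eq_of_le hjk with h | h
    · have := hmono j k h le_rfl; omega
    · subst h; omega
  have heq : t i + 1 = t j := by
    have hc : ((t i + 1 : ℕ) : ZMod n) = ((t j : ℕ) : ZMod n) := by
      push_cast; rw [← hj]
    have := congrArg ZMod.val hc
    rwa [ZMod.val_natCast_of_lt hlt_n, ZMod.val_natCast_of_lt htj] at this
  have hij : i < j := by
    by_contra h
    push_neg at h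
    rcases lt_or_eq_of_le h with h' | h'
    · have := hmono j i h' hik; omega
    · subst h'; omega
  have h1 : t (i + 1) ≤ t j := by
    rcases lt_or_eq_of_le (Nat.succ_le_of_lt hij) with h' | h'
    · exact le_of_lt (hmono (i + 1) j h' hjk)
    · exact le_of_eq (congrArg t h')
  have h2 : t i < t (i + 1) := hmono i (i + 1) (by omega) (by omega)
  omega
end

section
/- Let n > 1 be an integer and A = {t₀, t₁, …, t_k} ⊆ ℤ/nℤ with representatives t₀ = 0 and 1 ≤ t₁ < t₂ < ⋯ < t_k ≤ n−1, and suppose every element of the multiset union of A, A+1, A+2 has multiplicity 2. If 0 ∈ A+1, then t_k = n−1 and 1 ∉ A. If 0 ∈ A+2, then t_k = n−2 and 1 ∈ A. -/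
open scoped Classical

theorem last_element_of_zero_mem_translate
    (n k : ℕ) (hn : 1 < n) (t : ℕ → ℕ)
    (ht0 : t 0 = 0) (hmono : ∀ i j, i < j → j ≤ k → t i < t j)
    (htk : t k ≤ n - 1)
    (A : Set (ZMod n)) (hA : A = {z : ZMod n | ∃ i ≤ k, z = (t i : ZMod n)})
    (hmul : MultiplicityTwo A) :
    ((0 : ZMod n) - 1 ∈ A → t k = n - 1 ∧ (1 : ZMod n) ∉ A) ∧
    ((0 : ZMod n) - 2 ∈ A → t k = n - 2 ∧ (1 : ZMod n) ∈ A) := by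
  haveI : NeZero n := ⟨by omega⟩
  have h0A : (0 : ZMod n) ∈ A := by
    rw [hA]
    exact ⟨0, Nat.zero_le k, by rw [ht0]; simp⟩
  have hle : ∀ i, i ≤ k → t i ≤ t k := by
    intro i hi
    rcases lt_or_eq_of_le hi with h | h
    · exact (hmono i k h le_rfl).le
    · exact h ▸ le_rfl
  have hneg1 : (0 : ZMod n) - 1 = ((n - 1 : ℕ) : ZMod n) := by
    have h : ((n - 1 : ℕ) : ZMod n) + 1 = 0 := by
      rw [← Nat.cast_add_one, Nat.sub_add_cancel hn.le, ZMod.natCast_self]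
    exact (eq_sub_of_add_eq h).symm
  have hneg2 : (0 : ZMod n) - 2 = ((n - 2 : ℕ) : ZMod n) := by
    have h : ((n - 2 : ℕ) : ZMod n) + 2 = 0 := by
      have h2 : ((n - 2 : ℕ) : ZMod n) + ((2 : ℕ) : ZMod n) = 0 := by
        rw [← Nat.cast_add, Nat.sub_add_cancel (by omega : 2 ≤ n), ZMod.natCast_self]
      simpa using h2
    exact (eq_sub_of_add_eq h).symm
  have hrep : ∀ m : ℕ, m < n → ((m : ZMod n) ∈ A) → ∃ i ≤ k, t i = m := by
    intro m hm hmA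
    rw [hA] at hmA
    obtain ⟨i, hik, hi⟩ := hmA
    refine ⟨i, hik, ?_⟩
    have hti : t i < n := by have := hle i hik; omega
    have := congrArg ZMod.val hi
    rwa [ZMod.val_cast_of_lt hm, ZMod.val_cast_of_lt hti, eq_comm] at this
  have hz0 := hmul 0 (Or.inl h0A)
  have hz1 := hmul 1 (Or.inr (Or.inl (by rw [sub_self]; exact h0A)))
  rw [show (1 : ZMod n) - 1 = 0 from sub_self 1,
      show (1 : ZMod n) - 2 = 0 - 1 by ring] at hz1
  have htkA : ((t k : ℕ) : ZMod n) ∈ A := by rw [hA]; exact ⟨k, le_rfl, rfl⟩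
  constructor
  · intro h1
    rw [if_pos h0A, if_pos h1] at hz0 hz1
    constructor
    · obtain ⟨i, hik, hti⟩ := hrep (n - 1) (by omega) (hneg1 ▸ h1)
      have := hle i hik
      omega
    · intro h1A
      rw [if_pos h1A] at hz1
      omega
  · intro h2
    rw [if_pos h0A, if_pos h2] at hz0
    have hm1 : (0 : ZMod n) - 1 ∉ A := by
      intro h
      rw [if_pos h] at hz0
      omega
    have h1A : (1 : ZMod n) ∈ A := by
      by_contra h
      rw [if_pos h0A, if_neg hm1, if_neg h] at hz1
      omega
    refine ⟨?_, h1A⟩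
    have htk2 : t k ≤ n - 2 := by
      by_contra h
      have htkn : t k = n - 1 := by omega
      rw [htkn, ← hneg1] at htkA
      exact hm1 htkA
    obtain ⟨i, hik, hti⟩ := hrep (n - 2) (by omega) (hneg2 ▸ h2)
    have := hle i hik
    omega
end

section
/- Let n > 1 be an integer and A = {t₀, t₁, …, t_k} ⊆ ℤ/nℤ with representatives t₀ = 0 and 1 ≤ t₁ < t₂ < ⋯ < t_k ≤ n−1, and suppose every element of the multiset union of A, A+1, A+2 has multiplicity 2. If 1 ∈ A, then t_k = n−2; if 1 ∉ A, then t_k = n−1. -/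
open scoped Classical

theorem last_element_determined_by_one_mem
    (n k : ℕ) (hn : 1 < n) (t : ℕ → ℕ)
    (ht0 : t 0 = 0) (hmono : ∀ i j, i < j → j ≤ k → t i < t j)
    (htk : t k ≤ n - 1)
    (A : Set (ZMod n)) (hA : A = {z : ZMod n | ∃ i ≤ k, z = (t i : ZMod n)})
    (hmul : MultiplicityTwo A) :
    ((1 : ZMod n) ∈ A → t k = n - 2) ∧ ((1 : ZMod n) ∉ A → t k = n - 1) := by
  haveI : NeZero n := ⟨by omega⟩
  have h0A : (0 : ZMod n) ∈ A := by
    rw [hA]; exact ⟨0, Nat.zero_le k, by rw [ht0]; simp⟩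
  have hn1 : ((n - 1 : ℕ) : ZMod n) = -1 := by
    have h : ((n - 1 : ℕ) : ZMod n) = (n : ZMod n) - 1 := by
      push_cast [Nat.cast_sub (by omega : 1 ≤ n)]; ring
    rw [h, ZMod.natCast_self]; ring
  have hn2 : ((n - 2 : ℕ) : ZMod n) = -2 := by
    have h : ((n - 2 : ℕ) : ZMod n) = (n : ZMod n) - 2 := by
      push_cast [Nat.cast_sub (by omega : 2 ≤ n)]; ring
    rw [h, ZMod.natCast_self]; ring
  have hinj : ∀ a b : ℕ, a < n → b < n → (a : ZMod n) = (b : ZMod n) → a = b := by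
    intro a b ha hb hab
    have := congrArg ZMod.val hab
    rwa [ZMod.val_cast_of_lt ha, ZMod.val_cast_of_lt hb] at this
  have htkn : t k < n := by omega
  -- each t i (i ≤ k) is ≤ t k
  have hle : ∀ i, i ≤ k → t i ≤ t k := by
    intro i hi
    rcases Nat.lt_or_ge i k with h | h
    · exact (hmono i k h le_rfl).le
    · have : i = k := le_antisymm hi h
      rw [this]
  -- membership of -1 in A forces t k = n - 1
  have hmax1 : (-1 : ZMod n) ∈ A → n - 1 ≤ t k := by
    intro h
    rw [hA] at h
    obtain ⟨i, hi, hei⟩ := h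
    have hti : t i < n := lt_of_le_of_lt (hle i hi) htkn
    have h1 := hinj (t i) (n - 1) hti (by omega) (by rw [hn1, ← hei])
    have h2 := hle i hi
    omega
  have hmax2 : (-2 : ZMod n) ∈ A → n - 2 ≤ t k := by
    intro h
    rw [hA] at h
    obtain ⟨i, hi, hei⟩ := h
    have hti : t i < n := lt_of_le_of_lt (hle i hi) htkn
    have := hinj (t i) (n - 2) hti (by omega) (by rw [hn2, ← hei])
    have := hle i hi
    omega
  have htkA : ((t k : ℕ) : ZMod n) ∈ A := by
    rw [hA]; exact ⟨k, le_rfl, rfl⟩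
  constructor
  · intro h1A
    have e1 := hmul 1 (Or.inl h1A)
    rw [show (1 - 1 : ZMod n) = 0 by ring, show (1 - 2 : ZMod n) = -1 by ring,
      if_pos h1A, if_pos h0A] at e1
    have hm1 : (-1 : ZMod n) ∉ A := by
      intro h; rw [if_pos h] at e1; omega
    rw [if_neg hm1] at e1
    have e0 := hmul 0 (Or.inl h0A)
    rw [show (0 - 1 : ZMod n) = -1 by ring, show (0 - 2 : ZMod n) = -2 by ring,
      if_pos h0A, if_neg hm1] at e0
    have hm2 : (-2 : ZMod n) ∈ A := by
      by_contra h; rw [if_neg h] at e0; omega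
    have hge := hmax2 hm2
    -- t k ≠ n - 1
    have hne : t k ≠ n - 1 := by
      intro h
      apply hm1
      rwa [← hn1, ← h]
    omega
  · intro h1A
    have e1 := hmul 1 (Or.inr (Or.inl (by rw [show (1 - 1 : ZMod n) = 0 by ring]; exact h0A)))
    rw [show (1 - 1 : ZMod n) = 0 by ring, show (1 - 2 : ZMod n) = -1 by ring,
      if_neg h1A, if_pos h0A] at e1
    have hm1 : (-1 : ZMod n) ∈ A := by
      by_contra h; rw [if_neg h] at e1; omega
    have := hmax1 hm1
    omega
end

section
/- Let n > 1 be an integer and A = {t₀, t₁, …, t_k} ⊆ ℤ/nℤ with representatives t₀ = 0 and 1 ≤ t₁ < t₂ < ⋯ < t_k ≤ n−1, and suppose every element of the multiset union of A, A+1, A+2 has multiplicity 2. Then t_i = t_{i−2} + 3 for all i ∈ {2, 3, …, k}, and exactly one of the following holds: (1) if 1 ∈ A, then t₁ = 1, t_k = n−2, and t_i = t_{i−1} + 1 for odd i while t_i = t_{i−1} + 2 for even i (1 ≤ i ≤ k); (2) if 1 ∉ A, then t₁ = 2, t_k = n−1, and t_i = t_{i−1} + 1 for even i while t_i = t_{i−1}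 + 2 for odd i (1 ≤ i ≤ k). -/
open scoped Classical

theorem structure_of_multiplicity_two_subset
    (n k : ℕ) (hn : 1 < n) (t : ℕ → ℕ)
    (ht0 : t 0 = 0) (hmono : ∀ i j, i < j → j ≤ k → t i < t j)
    (htk : t k ≤ n - 1)
    (A : Set (ZMod n)) (hA : A = {z : ZMod n | ∃ i ≤ k, z = (t i : ZMod n)})
    (hmul : MultiplicityTwo A) :
    (∀ i, 2 ≤ i → i ≤ k → t i = t (i - 2) + 3) ∧
    ((1 : ZMod n) ∈ A → t 1 = 1 ∧ t k = n - 2 ∧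
      ∀ i, 1 ≤ i → i ≤ k →
        (Odd i → t i = t (i - 1) + 1) ∧ (Even i → t i = t (i - 1) + 2)) ∧
    ((1 : ZMod n) ∉ A → t 1 = 2 ∧ t k = n - 1 ∧
      ∀ i, 1 ≤ i → i ≤ k →
        (Even i → t i = t (i - 1) + 1) ∧ (Odd i → t i = t (i - 1) + 2)) := by
  haveI : NeZero n := ⟨by omega⟩
  -- nonstrict monotonicity
  have mono' : ∀ i j, i ≤ j → j ≤ k → t i ≤ t j := by
    intro i j hij hjk
    rcases Nat.eq_or_lt_of_le hij with h | h
    · rw [h]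
    · exact (hmono i j h hjk).le
  have tlt : ∀ i, i ≤ k → t i < n := by
    intro i hi
    have := mono' i k hi le_rfl
    omega
  have mem_t : ∀ i, i ≤ k → ((t i : ℕ) : ZMod n) ∈ A := by
    intro i hi; rw [hA]; exact ⟨i, hi, rfl⟩
  have hP0 : ((0 : ℕ) : ZMod n) ∈ A := by
    have := mem_t 0 (Nat.zero_le k); rwa [ht0] at this
  have rep : ∀ s : ℕ, s < n → ((s : ℕ) : ZMod n) ∈ A → ∃ j, j ≤ k ∧ s = t j := by
    intro s hs hPs
    rw [hA] at hPs
    obtain ⟨j, hj, he⟩ := hPs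
    refine ⟨j, hj, ?_⟩
    have h1 := ZMod.val_cast_of_lt hs
    have h2 := ZMod.val_cast_of_lt (tlt j hj)
    rw [he] at h1
    omega
  -- sliding windows (indexed by naturals)
  have W : ∀ m : ℕ, ((if ((m+2 : ℕ) : ZMod n) ∈ A then 1 else 0) +
      (if ((m+1 : ℕ) : ZMod n) ∈ A then 1 else 0) +
      (if ((m : ℕ) : ZMod n) ∈ A then 1 else 0) : ℕ) = 2 := by
    intro m
    induction m with
    | zero =>
      have e1 : ((0+2 : ℕ) : ZMod n) - 1 = ((0+1 : ℕ) : ZMod n) := by push_cast; ring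
      have e2 : ((0+2 : ℕ) : ZMod n) - 2 = ((0 : ℕ) : ZMod n) := by push_cast; ring
      have h := hmul ((0+2 : ℕ) : ZMod n) (by rw [e2]; exact Or.inr (Or.inr hP0))
      rwa [e1, e2] at h
    | succ m ih =>
      have e1 : ((m+1+2 : ℕ) : ZMod n) - 1 = ((m+1+1 : ℕ) : ZMod n) := by push_cast; ring
      have e2 : ((m+1+2 : ℕ) : ZMod n) - 2 = ((m+1 : ℕ) : ZMod n) := by push_cast; ring
      have hyp : ((m+2 : ℕ) : ZMod n) ∈ A ∨ ((m+1 : ℕ) : ZMod n) ∈ A := by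
        by_contra hc
        push_neg at hc
        rw [if_neg hc.1, if_neg hc.2] at ih
        split_ifs at ih <;> omega
      have h := hmul ((m+1+2 : ℕ) : ZMod n) (by
        rw [e1, e2]
        rcases hyp with h | h
        · exact Or.inr (Or.inl h)
        · exact Or.inr (Or.inr h))
      rwa [e1, e2] at h
  -- period 3
  have Pstep : ∀ m : ℕ, (((m+3 : ℕ) : ZMod n) ∈ A ↔ ((m : ℕ) : ZMod n) ∈ A) := by
    intro m
    have W1 := W m
    have W2 := W (m+1)
    simp only [show m+1+2 = m+3 from by omega, show m+1+1 = m+2 from by omega] at W2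
    split_ifs at W1 W2 <;> first | tauto | (exfalso; omega)
  have Pmult : ∀ q s : ℕ, (((3*q + s : ℕ) : ZMod n) ∈ A ↔ ((s : ℕ) : ZMod n) ∈ A) := by
    intro q
    induction q with
    | zero => intro s; norm_num
    | succ q ih =>
      intro s
      rw [show 3*(q+1) + s = (3*q + s) + 3 from by ring]
      exact (Pstep (3*q + s)).trans (ih s)
  have Pmod : ∀ m : ℕ, (((m : ℕ) : ZMod n) ∈ A ↔ ((m % 3 : ℕ) : ZMod n) ∈ A) := by
    intro m
    conv_lhs => rw [show m = 3*(m/3) + m % 3 from (Nat.div_add_mod m 3).symm]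
    exact Pmult _ _
  have Pshift : ∀ m : ℕ, (((m + n : ℕ) : ZMod n) ∈ A ↔ ((m : ℕ) : ZMod n) ∈ A) := by
    intro m
    have e : ((m + n : ℕ) : ZMod n) = ((m : ℕ) : ZMod n) := by
      push_cast [ZMod.natCast_self]; ring
    rw [e]
  -- 3 divides n
  have h3n : n % 3 = 0 := by
    by_contra h3
    have hPn : ((n : ℕ) : ZMod n) ∈ A := by
      have e : ((n : ℕ) : ZMod n) = ((0 : ℕ) : ZMod n) := by
        simp [ZMod.natCast_self]
      rwa [e]
    have hP12 : ((1 : ℕ) : ZMod n) ∈ A ∧ ((2 : ℕ) : ZMod n) ∈ A := by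
      rcases (show n % 3 = 1 ∨ n % 3 = 2 from by omega) with h | h
      · have hP1 : ((1 : ℕ) : ZMod n) ∈ A := by
          have := (Pmod n).mp hPn
          rwa [h] at this
        have hP2 : ((2 : ℕ) : ZMod n) ∈ A := by
          have h1n : ((1 + n : ℕ) : ZMod n) ∈ A := (Pshift 1).mpr hP1
          have := (Pmod (1 + n)).mp h1n
          rwa [show (1 + n) % 3 = 2 from by omega] at this
        exact ⟨hP1, hP2⟩
      · have hP2 : ((2 : ℕ) : ZMod n) ∈ A := by
          have := (Pmod n).mp hPn
          rwa [h] at this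
        have hP1 : ((1 : ℕ) : ZMod n) ∈ A := by
          have h2n : ((2 + n : ℕ) : ZMod n) ∈ A := (Pshift 2).mpr hP2
          have := (Pmod (2 + n)).mp h2n
          rwa [show (2 + n) % 3 = 1 from by omega] at this
        exact ⟨hP1, hP2⟩
    have W0 := W 0
    have hP2' : ((0+2 : ℕ) : ZMod n) ∈ A := hP12.2
    have hP1' : ((0+1 : ℕ) : ZMod n) ∈ A := hP12.1
    rw [if_pos hP2', if_pos hP1', if_pos hP0] at W0
    omega
  have hn3 : 3 ≤ n := by omega
  -- exactly one of 1, 2 is in A (as residues)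
  have hP12 : (((1 : ℕ) : ZMod n) ∈ A ↔ ¬ ((2 : ℕ) : ZMod n) ∈ A) := by
    have W0 := W 0
    rw [if_pos hP0] at W0
    by_cases h1 : ((0+1 : ℕ) : ZMod n) ∈ A <;> by_cases h2 : ((0+2 : ℕ) : ZMod n) ∈ A <;>
      simp only [if_pos, if_neg, h1, h2] at W0 <;>
      first | tauto | (exfalso; simp [h1, h2] at W0)
  -- characterization of membership mod 3
  obtain ⟨r, hr, Hchar⟩ : ∃ r : ℕ, (r = 1 ∨ r = 2) ∧
      ∀ m : ℕ, (((m : ℕ) : ZMod n) ∈ A ↔ (m % 3 = 0 ∨ m % 3 = r)) := by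
    by_cases hP1 : ((1 : ℕ) : ZMod n) ∈ A
    · refine ⟨1, Or.inl rfl, ?_⟩
      intro m
      have hP2 : ¬ ((2 : ℕ) : ZMod n) ∈ A := hP12.mp hP1
      have h0' : (0 : ZMod n) ∈ A := by exact_mod_cast hP0
      have h1' : (1 : ZMod n) ∈ A := by exact_mod_cast hP1
      have h2' : (2 : ZMod n) ∉ A := fun h => hP2 (by exact_mod_cast h)
      have hm := Pmod m
      rcases (show m % 3 = 0 ∨ m % 3 = 1 ∨ m % 3 = 2 from by omega) with h | h | h <;>
        rw [hm, h] <;> simp [h0', h1', h2']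
    · refine ⟨2, Or.inr rfl, ?_⟩
      intro m
      have hP2 : ((2 : ℕ) : ZMod n) ∈ A := by
        by_contra h2
        exact hP1 (hP12.mpr h2)
      have h0' : (0 : ZMod n) ∈ A := by exact_mod_cast hP0
      have h1' : (1 : ZMod n) ∉ A := fun h => hP1 (by exact_mod_cast h)
      have h2' : (2 : ZMod n) ∈ A := by exact_mod_cast hP2
      have hm := Pmod m
      rcases (show m % 3 = 0 ∨ m % 3 = 1 ∨ m % 3 = 2 from by omega) with h | h | h <;>
        rw [hm, h] <;> simp [h0', h1', h2']
  -- minimal-step property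
  have minstep : ∀ i, i < k → ∀ s : ℕ, s < n → ((s : ℕ) : ZMod n) ∈ A → t i < s →
      t (i+1) ≤ s := by
    intro i hik s hs hPs hts
    obtain ⟨j, hj, rfl⟩ := rep s hs hPs
    have hij : i < j := by
      by_contra h
      push_neg at h
      have := mono' j i h (by omega)
      omega
    have := mono' (i+1) j (by omega) hj
    omega
  -- membership of each t i in residue terms
  have tmod : ∀ i, i ≤ k → (t i % 3 = 0 ∨ t i % 3 = r) := by
    intro i hi
    exact (Hchar (t i)).mp (mem_t i hi)
  -- the gap lemma
  have gap : ∀ i, i + 2 ≤ k → t (i+2) = t i + 3 := by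
    intro i hik
    have hai := tmod i (by omega)
    have h1 : t i < t (i+1) := hmono i (i+1) (by omega) (by omega)
    have h2 : t (i+1) < t (i+2) := hmono (i+1) (i+2) (by omega) (by omega)
    have hlt : t (i+2) < n := tlt (i+2) hik
    have hone : ((t i + 1 : ℕ) : ZMod n) ∈ A ∨ ((t i + 2 : ℕ) : ZMod n) ∈ A := by
      rw [Hchar, Hchar]
      omega
    have step1 : t (i+1) ≤ t i + 2 := by
      rcases hone with h | h
      · have := minstep i (by omega) (t i + 1) (by omega) h (by omega)
        omega
      · exact minstep i (by omega) (t i + 2) (by omega) h (by omega)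
    have hnb : ¬ (((t i + 1 : ℕ) : ZMod n) ∈ A ∧ ((t i + 2 : ℕ) : ZMod n) ∈ A) := by
      rw [Hchar, Hchar]
      omega
    have step2 : t i + 3 ≤ t (i+2) := by
      by_contra h
      push_neg at h
      have e1 : t (i+1) = t i + 1 := by omega
      have e2 : t (i+2) = t i + 2 := by omega
      refine hnb ⟨?_, ?_⟩
      · have := mem_t (i+1) (by omega); rwa [e1] at this
      · have := mem_t (i+2) hik; rwa [e2] at this
    have hP3 : ((t i + 3 : ℕ) : ZMod n) ∈ A := by
      rw [Hchar]
      omega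
    have step3 : t (i+2) ≤ t i + 3 :=
      minstep (i+1) (by omega) (t i + 3) (by omega) hP3 (by omega)
    omega
  -- first conclusion
  refine ⟨?_, ?_, ?_⟩
  · intro i h2i hik
    obtain ⟨j, rfl⟩ : ∃ j, i = j + 2 := ⟨i - 2, by omega⟩
    simpa using gap j (by omega)
  -- case 1 ∈ A
  · intro h1A
    have hP1 : ((1 : ℕ) : ZMod n) ∈ A := by rwa [Nat.cast_one]
    have hr1 : r = 1 := by
      have := (Hchar 1).mp hP1
      omega
    subst hr1
    have hk1 : 1 ≤ k := by
      obtain ⟨j, hj, he⟩ := rep 1 (by omega) hP1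
      rcases Nat.eq_zero_or_pos j with h | h
      · rw [h, ht0] at he; omega
      · omega
    have ht1 : t 1 = 1 := by
      have h1 : t 1 ≤ 1 := minstep 0 (by omega) 1 (by omega) hP1 (by omega)
      have h2 := hmono 0 1 (by omega) hk1
      omega
    have htklast : t k = n - 2 := by
      have hPn2 : ((n - 2 : ℕ) : ZMod n) ∈ A := by
        rw [Hchar]
        omega
      have hmax : n - 2 ≤ t k := by
        obtain ⟨j, hj, he⟩ := rep (n-2) (by omega) hPn2
        have := mono' j k hj le_rfl
        omega
      have hne : t k ≠ n - 1 := by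
        intro he
        have := (Hchar (t k)).mp (mem_t k le_rfl)
        rw [he] at this
        omega
      omega
    -- closed form
    have cf : ∀ i, i ≤ k → t i = 3 * (i / 2) + i % 2 := by
      intro i
      induction i using Nat.strong_induction_on with
      | _ i ih =>
        intro hik
        match i with
        | 0 => simpa using ht0
        | 1 => simpa using ht1
        | (j+2) =>
          have hg := gap j hik
          have hj := ih j (by omega) (by omega)
          omega
    refine ⟨ht1, htklast, ?_⟩
    intro i hi hik
    have c1 := cf i hik
    have c2 := cf (i-1) (by omega)
    constructor
    · intro hodd
      rw [Nat.odd_iff] at hodd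
      omega
    · intro heven
      rw [Nat.even_iff] at heven
      omega
  -- case 1 ∉ A
  · intro h1A
    have hP1 : ¬ ((1 : ℕ) : ZMod n) ∈ A := by rwa [Nat.cast_one]
    have hr2 : r = 2 := by
      rcases hr with h | h
      · exfalso
        exact hP1 ((Hchar 1).mpr (by omega))
      · exact h
    subst hr2
    have hP2 : ((2 : ℕ) : ZMod n) ∈ A := by
      rw [Hchar]
      omega
    have hk1 : 1 ≤ k := by
      obtain ⟨j, hj, he⟩ := rep 2 (by omega) hP2
      rcases Nat.eq_zero_or_pos j with h | h
      · rw [h, ht0] at he; omega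
      · omega
    have ht1 : t 1 = 2 := by
      have h1 : t 1 ≤ 2 := minstep 0 (by omega) 2 (by omega) hP2 (by omega)
      have h2 := hmono 0 1 (by omega) hk1
      have hne : t 1 ≠ 1 := by
        intro he
        exact hP1 (by rw [← he]; exact mem_t 1 hk1)
      omega
    have htklast : t k = n - 1 := by
      have hPn1 : ((n - 1 : ℕ) : ZMod n) ∈ A := by
        rw [Hchar]
        omega
      have hmax : n - 1 ≤ t k := by
        obtain ⟨j, hj, he⟩ := rep (n-1) (by omega) hPn1
        have := mono' j k hj le_rfl
        omega
      omega
    have cf : ∀ i, i ≤ k → t i = 3 * (i / 2) + 2 * (i % 2) := by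
      intro i
      induction i using Nat.strong_induction_on with
      | _ i ih =>
        intro hik
        match i with
        | 0 => simpa using ht0
        | 1 => simpa using ht1
        | (j+2) =>
          have hg := gap j hik
          have hj := ih j (by omega) (by omega)
          omega
    refine ⟨ht1, htklast, ?_⟩
    intro i hi hik
    have c1 := cf i hik
    have c2 := cf (i-1) (by omega)
    constructor
    · intro heven
      rw [Nat.even_iff] at heven
      omega
    · intro hodd
      rw [Nat.odd_iff] at hodd
      omega
end
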